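/- arXiv:2205.12363 — 10 statements merged into one kernel-verified Lean document; each statement's English description precedes it below -/
import Mathlib

section
/- For every integer 1 ≤ i ≤ t ≤ n, the volume of the q-ary Hamming ball satisfies V_q(n−i, t−i) ≤ (t/((q−1)n))^i · V_q(n, t), where V_q(m, r) = ∑_{j=0}^{r} C(m, j)(q−1)^j and q ≥ 2. -/
/-- Volume of the q-ary Hamming ball of radius `r` in dimension `m`. -/
def V (q m r : ℕ) : ℕ := ∑ j ∈ Finset.range (r + 1), Nat.choose m j * (q - 1) ^ j

lemma key_nat (q n t : ℕ) (ht : 1 ≤ t) (htn : t ≤ n) :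
    (q - 1) * n * V q (n - 1) (t - 1) ≤ t * V q n t := by
  have hn : 1 ≤ n := le_trans ht htn
  unfold V
  rw [Finset.mul_sum, Finset.mul_sum, Nat.sub_add_cancel ht]
  have hstep : ∀ j, (q - 1) * n * (Nat.choose (n - 1) j * (q - 1) ^ j)
      = (j + 1) * Nat.choose n (j + 1) * (q - 1) ^ (j + 1) := by
    intro j
    have h := Nat.add_one_mul_choose_eq (n - 1) j
    rw [(by omega : n - 1 + 1 = n)] at h
    -- h : n * (n-1).choose j = n.choose (j+1) * (j+1)
    calc (q - 1) * n * (Nat.choose (n - 1) j * (q - 1) ^ j)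
        = (n * Nat.choose (n - 1) j) * ((q - 1) * (q - 1) ^ j) := by ring
      _ = (Nat.choose n (j + 1) * (j + 1)) * ((q - 1) * (q - 1) ^ j) := by rw [h]
      _ = (j + 1) * Nat.choose n (j + 1) * (q - 1) ^ (j + 1) := by
          rw [pow_succ]; ring
  calc ∑ j ∈ Finset.range t, (q - 1) * n * (Nat.choose (n - 1) j * (q - 1) ^ j)
      = ∑ j ∈ Finset.range t, (j + 1) * Nat.choose n (j + 1) * (q - 1) ^ (j + 1) := by
        exact Finset.sum_congr rfl fun j _ => hstep j
    _ = ∑ k ∈ Finset.range (t + 1), k * Nat.choose n k * (q - 1) ^ k := by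
        rw [Finset.sum_range_succ' (fun k => k * Nat.choose n k * (q - 1) ^ k) t]
        simp
    _ ≤ ∑ k ∈ Finset.range (t + 1), t * (Nat.choose n k * (q - 1) ^ k) := by
        apply Finset.sum_le_sum
        intro k hk
        rw [Finset.mem_range] at hk
        have : k ≤ t := Nat.lt_succ_iff.mp hk
        calc k * Nat.choose n k * (q - 1) ^ k ≤ t * Nat.choose n k * (q - 1) ^ k := by
              exact Nat.mul_le_mul_right _ (Nat.mul_le_mul_right _ this)
          _ = t * (Nat.choose n k * (q - 1) ^ k) := by ring

lemma key_rat (q n t : ℕ) (hq : 2 ≤ q) (ht : 1 ≤ t) (htn : t ≤ n) :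
    (V q (n - 1) (t - 1) : ℚ) ≤ (t : ℚ) / ((q - 1) * n) * V q n t := by
  have hn : 1 ≤ n := le_trans ht htn
  have hq1 : (1 : ℚ) ≤ (q : ℚ) - 1 := by
    have : (2 : ℚ) ≤ (q : ℚ) := by exact_mod_cast hq
    linarith
  have hd : (0 : ℚ) < ((q : ℚ) - 1) * n := by
    have hn' : (0 : ℚ) < n := by exact_mod_cast hn
    nlinarith
  rw [div_mul_eq_mul_div, le_div_iff₀ hd]
  have h := key_nat q n t ht htn
  have h' : (((q - 1) * n * V q (n - 1) (t - 1) : ℕ) : ℚ) ≤ ((t * V q n t : ℕ) : ℚ) :=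
    Nat.cast_le.mpr h
  have hq' : 1 ≤ q := le_trans one_le_two hq
  push_cast [Nat.cast_sub hq'] at h'
  linarith

theorem stmt0 (q n t i : ℕ) (hq : 2 ≤ q) (hi : 1 ≤ i) (hit : i ≤ t) (htn : t ≤ n) :
    (V q (n - i) (t - i) : ℚ) ≤ ((t : ℚ) / ((q - 1) * n)) ^ i * V q n t := by
  induction i generalizing n t with
  | zero => omega
  | succ i ih =>
    rcases Nat.eq_zero_or_pos i with hi0 | hipos
    · subst hi0
      simpa using key_rat q n t hq hit htn
    · -- i ≥ 1, i + 1 ≤ t ≤ n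
      have ht1 : 1 ≤ t := le_trans (le_trans hipos (Nat.le_succ i)) hit
      have hn1 : 1 ≤ n := le_trans ht1 htn
      have ht2 : 2 ≤ t := by omega
      have hn2 : 2 ≤ n := by omega
      have hIH := ih (n - 1) (t - 1) hipos (by omega : i ≤ t - 1) (by omega : t - 1 ≤ n - 1)
      have hsub1 : n - (i + 1) = (n - 1) - i := by omega
      have hsub2 : t - (i + 1) = (t - 1) - i := by omega
      rw [hsub1, hsub2]
      have hkey := key_rat q n t hq ht1 htn
      -- ratio monotonicity
      have hq1 : (1 : ℚ) ≤ (q : ℚ) - 1 := by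
        have : (2 : ℚ) ≤ (q : ℚ) := by exact_mod_cast hq
        linarith
      have hnQ : (0 : ℚ) < (n : ℚ) := by exact_mod_cast hn1
      have hn1Q : (0 : ℚ) < (n : ℚ) - 1 := by
        have : (2 : ℚ) ≤ (n : ℚ) := by exact_mod_cast hn2
        linarith
      have hd1 : (0 : ℚ) < ((q : ℚ) - 1) * ((n : ℚ) - 1) := by nlinarith
      have hd2 : (0 : ℚ) < ((q : ℚ) - 1) * (n : ℚ) := by nlinarith
      have hcastt : ((t - 1 : ℕ) : ℚ) = (t : ℚ) - 1 := by
        push_cast [Nat.cast_sub ht1]; ring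
      have hcastn : ((n - 1 : ℕ) : ℚ) = (n : ℚ) - 1 := by
        push_cast [Nat.cast_sub hn1]; ring
      rw [hcastt, hcastn] at hIH
      have hratio : ((t : ℚ) - 1) / (((q : ℚ) - 1) * ((n : ℚ) - 1)) ≤ (t : ℚ) / (((q : ℚ) - 1) * n) := by
        rw [div_le_div_iff₀ hd1 hd2]
        have htnQ : (t : ℚ) ≤ (n : ℚ) := by exact_mod_cast htn
        nlinarith
      have hr1 : (0 : ℚ) ≤ ((t : ℚ) - 1) / (((q : ℚ) - 1) * ((n : ℚ) - 1)) := by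
        apply div_nonneg
        · have : (2 : ℚ) ≤ (t : ℚ) := by exact_mod_cast ht2
          linarith
        · linarith
      have hVpos : (0 : ℚ) ≤ (V q (n - 1) (t - 1) : ℚ) := by positivity
      have hVpos2 : (0 : ℚ) ≤ (V q n t : ℚ) := by positivity
      calc (V q (n - 1 - i) (t - 1 - i) : ℚ)
          ≤ (((t : ℚ) - 1) / (((q : ℚ) - 1) * ((n : ℚ) - 1))) ^ i * V q (n - 1) (t - 1) := hIH
        _ ≤ ((t : ℚ) / (((q : ℚ) - 1) * n)) ^ i * V q (n - 1) (t - 1) := by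
            apply mul_le_mul_of_nonneg_right _ hVpos
            exact pow_le_pow_left₀ hr1 hratio i
        _ ≤ ((t : ℚ) / (((q : ℚ) - 1) * n)) ^ i * ((t : ℚ) / (((q : ℚ) - 1) * n) * V q n t) := by
            apply mul_le_mul_of_nonneg_left hkey
            positivity
        _ = ((t : ℚ) / (((q : ℚ) - 1) * n)) ^ (i + 1) * V q n t := by ring
end

section
/- For integers m ≥ 1 and r ≥ 1 with r ≤ m, V_q(m−1, r−1)/V_q(m, r) ≤ r/((q−1)m); equivalently, (q−1)·m·V_q(m−1, r−1) ≤ r·V_q(m, r). -/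
theorem stmt1 (q m r : ℕ) (hq : 2 ≤ q) (hr : 1 ≤ r) (hrm : r ≤ m) :
    (q - 1) * m * V q (m - 1) (r - 1) ≤ r * V q m r := by
  have hm : 1 ≤ m := hr.trans hrm
  have hr1 : r - 1 + 1 = r := Nat.succ_pred_eq_of_pos hr
  have hm1 : m - 1 + 1 = m := Nat.succ_pred_eq_of_pos hm
  have key : ∀ j, (q - 1) * m * (Nat.choose (m - 1) j * (q - 1) ^ j)
      = (j + 1) * (Nat.choose m (j + 1) * (q - 1) ^ (j + 1)) := by
    intro j
    have h := Nat.add_one_mul_choose_eq (m - 1) j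
    simp only [Nat.succ_eq_add_one, hm1] at h
    -- h : m * Nat.choose (m-1) j = Nat.choose m (j+1) * (j+1)
    calc (q - 1) * m * (Nat.choose (m - 1) j * (q - 1) ^ j)
        = (m * Nat.choose (m - 1) j) * ((q - 1) ^ (j + 1)) := by ring
      _ = (Nat.choose m (j + 1) * (j + 1)) * (q - 1) ^ (j + 1) := by rw [h]
      _ = (j + 1) * (Nat.choose m (j + 1) * (q - 1) ^ (j + 1)) := by ring
  calc (q - 1) * m * V q (m - 1) (r - 1)
      = ∑ j ∈ Finset.range r, (j + 1) * (Nat.choose m (j + 1) * (q - 1) ^ (j + 1)) := by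
        unfold V
        rw [hr1, Finset.mul_sum]
        exact Finset.sum_congr rfl fun j _ => key j
    _ ≤ ∑ j ∈ Finset.range r, r * (Nat.choose m (j + 1) * (q - 1) ^ (j + 1)) := by
        refine Finset.sum_le_sum fun j hj => ?_
        exact Nat.mul_le_mul_right _ (Finset.mem_range.mp hj)
    _ = r * ∑ j ∈ Finset.range r, Nat.choose m (j + 1) * (q - 1) ^ (j + 1) := by
        rw [Finset.mul_sum]
    _ ≤ r * V q m r := by
        refine Nat.mul_le_mul_left _ ?_
        unfold V
        rw [Finset.sum_range_succ' (fun j => Nat.choose m j * (q - 1) ^ j) r]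
        exact Nat.le_add_right _ _
end

section
/- For integers 1 ≤ α ≤ t with t + α ≤ n and α ≤ n − t, one has V_q(n, t+α) ≥ ((q−1)n/(t+α))^α · ((n−α+1−t)/(n−α+1))^α · V_q(n, t). -/
open Finset

private lemma factor_ineq (N T A J I : ℚ) (hA : 1 ≤ A) (hAT : A ≤ T) (hJ : 0 ≤ J) (hJT : J ≤ T)
    (hTAN : T + A ≤ N) (hI : 0 ≤ I) (hIA : I ≤ A - 1) :
    N * (N - A + 1 - T) * (J + (A - 1 - I) + 1) ≤ (N - J - I) * ((T + A) * (N - A + 1)) := by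
  rcases eq_or_lt_of_le hA with h1 | h1
  · have hI0 : I = 0 := le_antisymm (by linarith) hI
    subst hI0
    rw [← h1]
    nlinarith [mul_nonneg (mul_nonneg (by linarith : (0:ℚ) ≤ N) (by linarith : (0:ℚ) ≤ N + 1)) (sub_nonneg.2 hJT)]
  · have key : (A - 1) * ((N - J - I) * ((T + A) * (N - A + 1)) - N * (N - A + 1 - T) * (J + (A - 1 - I) + 1))
        = (A - 1) * (T - J) * ((T + A) * (N - A + 1) + N * (N - A + 1 - T))
          + (A - 1 - I) * ((T + A) * T * (A - 1))
          + I * ((N - T - A + 1) * (A - 1) * (N - T - A)) := by ring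
    have h2 : 0 ≤ (A - 1) * (T - J) * ((T + A) * (N - A + 1) + N * (N - A + 1 - T)) :=
      mul_nonneg (mul_nonneg (by linarith) (by linarith)) (by nlinarith)
    have h3 : 0 ≤ (A - 1 - I) * ((T + A) * T * (A - 1)) :=
      mul_nonneg (by linarith) (mul_nonneg (mul_nonneg (by linarith) (by linarith)) (by linarith))
    have h4 : 0 ≤ I * ((N - T - A + 1) * (A - 1) * (N - T - A)) :=
      mul_nonneg hI (mul_nonneg (mul_nonneg (by linarith) (by linarith)) (by linarith))
    nlinarith [key, h2, h3, h4]

private lemma choose_shift (n j a : ℕ) (h : j + a ≤ n) :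
    (Nat.choose n (j + a) : ℚ) * ∏ i ∈ range a, ((j : ℚ) + i + 1)
      = (Nat.choose n j : ℚ) * ∏ i ∈ range a, ((n : ℚ) - j - i) := by
  induction a with
  | zero => simp
  | succ a ih =>
    have h' : j + a ≤ n := by omega
    have key : (Nat.choose n (j + a + 1) : ℚ) * ((j : ℚ) + a + 1)
        = (Nat.choose n (j + a) : ℚ) * ((n : ℚ) - j - a) := by
      have h2 := Nat.choose_succ_right_eq n (j + a)
      have h3 : ((Nat.choose n (j + a + 1) * (j + a + 1) : ℕ) : ℚ)
          = ((Nat.choose n (j + a) * (n - (j + a)) : ℕ) : ℚ) := by rw [h2]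
      push_cast [Nat.cast_sub h'] at h3
      linarith [h3]
    rw [prod_range_succ, prod_range_succ]
    have := ih h'
    show (Nat.choose n (j + a + 1) : ℚ) * ((∏ i ∈ range a, ((j : ℚ) + i + 1)) * ((j : ℚ) + a + 1))
      = (Nat.choose n j : ℚ) * ((∏ i ∈ range a, ((n : ℚ) - j - i)) * ((n : ℚ) - j - a))
    linear_combination (∏ i ∈ range a, ((j:ℚ) + i + 1)) * key + ((n:ℚ) - j - a) * this

private lemma prod_ineq (n t a j : ℕ) (ha : 1 ≤ a) (hat : a ≤ t) (hjt : j ≤ t) (htn : t + a ≤ n) :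
    ((n : ℚ) * ((n:ℚ) - a + 1 - t)) ^ a * ∏ i ∈ range a, ((j : ℚ) + i + 1)
      ≤ (((t:ℚ) + a) * ((n:ℚ) - a + 1)) ^ a * ∏ i ∈ range a, ((n : ℚ) - j - i) := by
  have htn' : (t : ℚ) + a ≤ n := by exact_mod_cast htn
  have h1 : ((n : ℚ) * ((n:ℚ) - a + 1 - t)) ^ a * ∏ i ∈ range a, ((j : ℚ) + i + 1)
      = ∏ i ∈ range a, ((n : ℚ) * ((n:ℚ) - a + 1 - t) * ((j : ℚ) + ((a - 1 - i : ℕ):ℚ) + 1)) := by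
    rw [prod_mul_distrib, prod_const, card_range]
    congr 1
    exact (prod_range_reflect (fun i => (j:ℚ) + i + 1) a).symm
  have h2 : (((t:ℚ) + a) * ((n:ℚ) - a + 1)) ^ a * ∏ i ∈ range a, ((n : ℚ) - j - i)
      = ∏ i ∈ range a, ((((t:ℚ) + a) * ((n:ℚ) - a + 1)) * ((n : ℚ) - j - i)) := by
    rw [prod_mul_distrib, prod_const, card_range]
  rw [h1, h2]
  apply prod_le_prod
  · intro i hi
    have : (0:ℚ) ≤ (n:ℚ) - a + 1 - t := by linarith
    positivity
  · intro i hi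
    rw [mem_range] at hi
    have hcast : ((a - 1 - i : ℕ) : ℚ) = (a:ℚ) - 1 - i := by
      have h' : a - 1 - i = a - (1 + i) := by omega
      rw [h', Nat.cast_sub (by omega)]
      push_cast; ring
    rw [hcast]
    have hia : (i:ℚ) + 1 ≤ a := by exact_mod_cast hi
    have := factor_ineq (n:ℚ) (t:ℚ) (a:ℚ) (j:ℚ) (i:ℚ) (by exact_mod_cast ha)
      (by exact_mod_cast hat) (by positivity) (by exact_mod_cast hjt) htn'
      (by positivity) (by linarith)
    linarith

theorem stmt2 (q n t α : ℕ) (hq : 2 ≤ q) (hα : 1 ≤ α) (hαt : α ≤ t) (htn : t + α ≤ n) :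
    (V q n (t + α) : ℚ) ≥
      (((q : ℚ) - 1) * n / (t + α)) ^ α *
        (((n : ℚ) - α + 1 - t) / ((n : ℚ) - α + 1)) ^ α * V q n t := by
  have hq1 : 1 ≤ q := by omega
  set Q : ℚ := (q : ℚ) - 1 with hQdef
  have hQ1 : (1:ℚ) ≤ Q := by
    have : (2:ℚ) ≤ q := by exact_mod_cast hq
    simp [hQdef]; linarith
  have hQ0 : (0:ℚ) ≤ Q := by linarith
  have hVcast : ∀ r, (V q n r : ℚ) = ∑ j ∈ range (r + 1), (Nat.choose n j : ℚ) * Q ^ j := by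
    intro r
    simp only [V, Nat.cast_sum, Nat.cast_mul, Nat.cast_pow, Nat.cast_sub hq1, Nat.cast_one, hQdef]
  have hden1 : (0:ℚ) < (t:ℚ) + α := by
    have : (1:ℚ) ≤ (α:ℚ) := by exact_mod_cast hα
    have : (0:ℚ) ≤ (t:ℚ) := by positivity
    linarith
  have hden2 : (0:ℚ) < (n:ℚ) - α + 1 := by
    have h' : (t:ℚ) + α ≤ n := by exact_mod_cast htn
    have : (0:ℚ) ≤ (t:ℚ) := by positivity
    linarith
  set C : ℚ := Q * n * ((n:ℚ) - α + 1 - t) / (((t:ℚ) + α) * ((n:ℚ) - α + 1)) with hCdef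
  rw [ge_iff_le, ← mul_pow, div_mul_div_comm, ← hCdef]
  -- per-term inequality
  have key : ∀ j ∈ range (t + 1),
      C ^ α * ((Nat.choose n j : ℚ) * Q ^ j) ≤ (Nat.choose n (j + α) : ℚ) * Q ^ (j + α) := by
    intro j hj
    rw [mem_range] at hj
    have hjt : j ≤ t := by omega
    have hja : j + α ≤ n := by omega
    have hP1 : (0:ℚ) < ∏ i ∈ range α, ((j : ℚ) + i + 1) := by
      apply prod_pos; intro i _; positivity
    have hDpos : (0:ℚ) < (((t:ℚ) + α) * ((n:ℚ) - α + 1)) ^ α := by positivity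
    rw [hCdef, div_pow, div_mul_eq_mul_div, div_le_iff₀ hDpos]
    have main : (Q * n * ((n:ℚ) - α + 1 - t)) ^ α * ((Nat.choose n j : ℚ) * Q ^ j)
          * (∏ i ∈ range α, ((j : ℚ) + i + 1))
        ≤ (Nat.choose n (j + α) : ℚ) * Q ^ (j + α) * (((t:ℚ) + α) * ((n:ℚ) - α + 1)) ^ α
          * (∏ i ∈ range α, ((j : ℚ) + i + 1)) := by
      have hprod := prod_ineq n t α j hα hαt hjt htn
      have hnn : (0:ℚ) ≤ (Nat.choose n j : ℚ) * Q ^ (j + α) := by positivity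
      calc (Q * n * ((n:ℚ) - α + 1 - t)) ^ α * ((Nat.choose n j : ℚ) * Q ^ j)
            * (∏ i ∈ range α, ((j : ℚ) + i + 1))
          = ((Nat.choose n j : ℚ) * Q ^ (j + α)) *
              (((n : ℚ) * ((n:ℚ) - α + 1 - t)) ^ α * ∏ i ∈ range α, ((j : ℚ) + i + 1)) := by
            rw [show Q * ↑n * ((n:ℚ) - α + 1 - t) = Q * ((n:ℚ) * ((n:ℚ) - α + 1 - t)) by ring,
              mul_pow, pow_add]; ring
        _ ≤ ((Nat.choose n j : ℚ) * Q ^ (j + α)) *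
              ((((t:ℚ) + α) * ((n:ℚ) - α + 1)) ^ α * ∏ i ∈ range α, ((n : ℚ) - j - i)) :=
            mul_le_mul_of_nonneg_left hprod hnn
        _ = Q ^ (j + α) * (((t:ℚ) + α) * ((n:ℚ) - α + 1)) ^ α *
              ((Nat.choose n j : ℚ) * ∏ i ∈ range α, ((n : ℚ) - j - i)) := by ring
        _ = Q ^ (j + α) * (((t:ℚ) + α) * ((n:ℚ) - α + 1)) ^ α *
              ((Nat.choose n (j + α) : ℚ) * ∏ i ∈ range α, ((j : ℚ) + i + 1)) := by
            rw [← choose_shift n j α hja]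
        _ = (Nat.choose n (j + α) : ℚ) * Q ^ (j + α) * (((t:ℚ) + α) * ((n:ℚ) - α + 1)) ^ α
              * (∏ i ∈ range α, ((j : ℚ) + i + 1)) := by ring
    exact le_of_mul_le_mul_right main hP1
  -- sum comparison
  calc C ^ α * (V q n t : ℚ)
      = ∑ j ∈ range (t + 1), C ^ α * ((Nat.choose n j : ℚ) * Q ^ j) := by
        rw [hVcast, mul_sum]
    _ ≤ ∑ j ∈ range (t + 1), (Nat.choose n (j + α) : ℚ) * Q ^ (j + α) := sum_le_sum key
    _ = ∑ k ∈ Finset.Ico α (t + α + 1), (Nat.choose n k : ℚ) * Q ^ k := by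
        rw [Finset.sum_Ico_eq_sum_range]
        have h' : t + α + 1 - α = t + 1 := by omega
        rw [h']
        apply Finset.sum_congr rfl
        intro i _
        rw [Nat.add_comm α i]
    _ ≤ ∑ k ∈ range (t + α + 1), (Nat.choose n k : ℚ) * Q ^ k := by
        apply Finset.sum_le_sum_of_subset_of_nonneg
        · rw [range_eq_Ico]
          exact Finset.Ico_subset_Ico (Nat.zero_le α) le_rfl
        · intro k _ _; positivity
    _ = (V q n (t + α) : ℚ) := (hVcast (t + α)).symm
end

section
/- For integers 0 ≤ α ≤ n and 0 ≤ t ≤ n − α, the ratio of Hamming ball volumes satisfies V_q(n−α, t)/V_q(n, t) ≥ ((n−α+1−t)/(n−α+1))^α. -/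
lemma V_pos (q m r : ℕ) : 0 < V q m r := by
  unfold V
  apply Finset.sum_pos'
  · intro i _; positivity
  · exact ⟨0, Finset.mem_range.mpr (Nat.succ_pos r), by simp⟩

lemma V_key (q m t : ℕ) (ht : t ≤ m) :
    (m + 1 - t) * V q (m + 1) t ≤ (m + 1) * V q m t := by
  unfold V
  rw [Finset.mul_sum, Finset.mul_sum]
  apply Finset.sum_le_sum
  intro j hj
  have hjt : j ≤ t := Nat.lt_succ_iff.mp (Finset.mem_range.mp hj)
  rw [← mul_assoc, ← mul_assoc]
  apply Nat.mul_le_mul_right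
  calc (m + 1 - t) * (m + 1).choose j
      ≤ (m + 1 - j) * (m + 1).choose j :=
        Nat.mul_le_mul_right _ (Nat.sub_le_sub_left hjt _)
    _ = (m + 1) * m.choose j := by
        rw [mul_comm (m + 1 - j), ← Nat.choose_mul_succ_eq]; ring

lemma V_aux (q n t : ℕ) : ∀ α : ℕ, α + t ≤ n →
    (((n : ℚ) - α + 1 - t) / ((n : ℚ) - α + 1)) ^ α * V q n t ≤ V q (n - α) t := by
  intro α
  induction α with
  | zero => intro _; simp
  | succ α ih =>
    intro h
    push_cast
    have h' : α + t ≤ n := by omega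
    have IH := ih h'
    have hkey := V_key q (n - (α + 1)) t (by omega)
    have hm1 : n - (α + 1) + 1 = n - α := by omega
    rw [hm1] at hkey
    have hkeyQ : ((n : ℚ) - α - t) * V q (n - α) t ≤ ((n : ℚ) - α) * V q (n - (α + 1)) t := by
      have := Nat.cast_le (α := ℚ) |>.mpr hkey
      push_cast at this
      have e1 : ((n - α : ℕ) : ℚ) = (n : ℚ) - α := by
        have : α ≤ n := by omega
        push_cast [this]; ring
      have e2 : ((n - α - t : ℕ) : ℚ) = (n : ℚ) - α - t := by
        have h1 : t ≤ n - α := by omega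
        have h2 : α ≤ n := by omega
        push_cast [Nat.sub_sub, Nat.cast_sub (by omega : α + t ≤ n)]
        ring
      rw [e1, e2] at this
      exact_mod_cast this
    set b2 : ℚ := ((n : ℚ) - ((α : ℚ) + 1) + 1 - t) / ((n : ℚ) - ((α : ℚ) + 1) + 1) with hb2
    set b1 : ℚ := ((n : ℚ) - α + 1 - t) / ((n : ℚ) - α + 1) with hb1
    have hnum : (1 : ℚ) ≤ (n : ℚ) - α - t := by
      have : (α + 1 + t : ℚ) ≤ n := by exact_mod_cast h
      push_cast at this; linarith
    have hden : (0 : ℚ) < (n : ℚ) - α := by linarith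
    have hb2eq : b2 = ((n : ℚ) - α - t) / ((n : ℚ) - α) := by
      rw [hb2]; push_cast; ring_nf
    have hb2pos : 0 ≤ b2 := by
      rw [hb2eq]; positivity
    have hb1pos : 0 ≤ b1 := by
      rw [hb1]
      have ht' : (t : ℚ) ≤ (n : ℚ) - α := by
        have : (α + t : ℚ) ≤ n := by exact_mod_cast h'
        push_cast at this; linarith
      have : (0:ℚ) < (n : ℚ) - α + 1 := by linarith
      apply div_nonneg <;> linarith
    have hb21 : b2 ≤ b1 := by
      rw [hb2eq, hb1]
      rw [div_le_div_iff₀ hden (by linarith)]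
      nlinarith [hnum, hden]
    have hVpos : (0 : ℚ) < V q n t := by exact_mod_cast V_pos q n t
    have hBpos : (0 : ℚ) ≤ (V q (n - α) t : ℚ) := by positivity
    have step1 : b2 * V q (n - α) t ≤ V q (n - (α + 1)) t := by
      rw [hb2eq, div_mul_eq_mul_div, div_le_iff₀ hden]
      calc ((n : ℚ) - α - t) * V q (n - α) t ≤ ((n : ℚ) - α) * V q (n - (α + 1)) t := hkeyQ
        _ = (V q (n - (α + 1)) t : ℚ) * ((n : ℚ) - α) := by ring
    calc b2 ^ (α + 1) * V q n t = b2 * (b2 ^ α * V q n t) := by ring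
      _ ≤ b2 * (b1 ^ α * V q n t) := by
          apply mul_le_mul_of_nonneg_left _ hb2pos
          apply mul_le_mul_of_nonneg_right _ hVpos.le
          exact pow_le_pow_left₀ hb2pos hb21 α
      _ ≤ b2 * V q (n - α) t := mul_le_mul_of_nonneg_left IH hb2pos
      _ ≤ V q (n - (α + 1)) t := step1

theorem stmt3 (q n t α : ℕ) (hq : 2 ≤ q) (h : α + t ≤ n) :
    (V q (n - α) t : ℚ) / V q n t ≥ (((n : ℚ) - α + 1 - t) / ((n : ℚ) - α + 1)) ^ α := by
  have hVpos : (0 : ℚ) < V q n t := by exact_mod_cast V_pos q n t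
  rw [ge_iff_le, le_div_iff₀ hVpos]
  exact V_aux q n t α h
end

section
/- For x, y ∈ [q]^n with Hamming distance d(x,y) = 1, the intersection of the two radius-t Hamming balls B(x,t) ∩ B(y,t) has cardinality exactly q · V_q(n−1, t−1), provided 1 ≤ t ≤ n. -/
open Finset

/-- The Hamming ball of radius `r` around `x` in `[q]^n`. -/
def ball {q n : ℕ} (x : Fin n → Fin q) (r : ℕ) : Finset (Fin n → Fin q) :=
  Finset.univ.filter (fun y => hammingDist x y ≤ r)

lemma sphere_card' {ι : Type*} [Fintype ι] [DecidableEq ι] {q : ℕ} (x : ι → Fin q) (j : ℕ) :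
    (Finset.univ.filter fun z : ι → Fin q => (Finset.univ.filter fun i => x i ≠ z i).card = j).card
      = (Fintype.card ι).choose j * (q - 1) ^ j := by
  have h1 : (Finset.univ.filter fun z : ι → Fin q =>
        (Finset.univ.filter fun i => x i ≠ z i).card = j)
      = (Finset.univ.powersetCard j).biUnion
          (fun S => Fintype.piFinset (fun i => if i ∈ S then Finset.univ.erase (x i)
            else {x i})) := by
    ext z
    simp only [mem_filter, mem_univ, true_and, mem_biUnion, mem_powersetCard,
      Fintype.mem_piFinset]
    constructor
    · intro hz
      refine ⟨Finset.univ.filter fun i => x i ≠ z i, ⟨subset_univ _, hz⟩, ?_⟩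
      intro i
      by_cases h : x i ≠ z i <;> simp [h]
      · exact fun hh => h (hh.symm)
      · push_neg at h; exact h.symm
    · rintro ⟨S, ⟨-, hcard⟩, hz⟩
      have : (Finset.univ.filter fun i => x i ≠ z i) = S := by
        ext i
        simp only [mem_filter, mem_univ, true_and]
        constructor
        · intro h
          by_contra hi
          have := hz i
          simp only [if_neg hi, mem_singleton] at this
          exact h this.symm
        · intro hi
          have := hz i
          simp only [if_pos hi, mem_erase, mem_univ, and_true] at this
          exact fun h => this h.symm
      rw [this]; exact hcard
  rw [h1, Finset.card_biUnion]
  · have h2 : ∀ S ∈ Finset.univ.powersetCard j,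
        (Fintype.piFinset (fun i => if i ∈ S then Finset.univ.erase (x i) else {x i})).card
          = (q - 1) ^ j := by
      intro S hS
      rw [Fintype.card_piFinset]
      simp only [mem_powersetCard] at hS
      have : ∀ i, (if i ∈ S then Finset.univ.erase (x i) else ({x i} : Finset (Fin q))).card
          = if i ∈ S then q - 1 else 1 := by
        intro i
        by_cases h : i ∈ S <;> simp [h, Finset.card_erase_of_mem]
      rw [Finset.prod_congr rfl fun i _ => this i]
      rw [Finset.prod_ite_mem, Finset.univ_inter, Finset.prod_const, hS.2]
    rw [Finset.sum_congr rfl h2, Finset.sum_const, Finset.card_powersetCard, Finset.card_univ,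
      smul_eq_mul]
  · intro S hS T hT hST
    simp only [Finset.disjoint_left]
    intro z hzS hzT
    apply hST
    ext i
    have h1 := (Fintype.mem_piFinset.mp hzS) i
    have h2 := (Fintype.mem_piFinset.mp hzT) i
    constructor
    · intro hi
      by_contra hiT
      rw [if_pos hi] at h1
      rw [if_neg hiT, mem_singleton] at h2
      rw [h2] at h1
      simp at h1
    · intro hi
      by_contra hiS
      rw [if_pos hi] at h2
      rw [if_neg hiS, mem_singleton] at h1
      rw [h1] at h2
      simp at h2

lemma ball_card' {ι : Type*} [Fintype ι] [DecidableEq ι] {q : ℕ} (x : ι → Fin q) (r : ℕ) :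
    (Finset.univ.filter fun z : ι → Fin q => hammingDist x z ≤ r).card
      = ∑ j ∈ Finset.range (r + 1), (Fintype.card ι).choose j * (q - 1) ^ j := by
  have h1 : (Finset.univ.filter fun z : ι → Fin q => hammingDist x z ≤ r)
      = (Finset.range (r + 1)).biUnion (fun j => Finset.univ.filter
          fun z : ι → Fin q => (Finset.univ.filter fun i => x i ≠ z i).card = j) := by
    ext z
    simp only [mem_filter, mem_univ, true_and, mem_biUnion, mem_range, Nat.lt_succ_iff,
      hammingDist]
    constructor
    · intro h; exact ⟨_, h, rfl⟩
    · rintro ⟨j, hj, h2⟩; omega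
  rw [h1, Finset.card_biUnion]
  · exact Finset.sum_congr rfl fun j _ => sphere_card' x j
  · intro a _ b _ hab
    simp only [Finset.disjoint_left, mem_filter]
    rintro z ⟨-, h1⟩ ⟨-, h2⟩
    exact hab (h1 ▸ h2 ▸ rfl)

lemma card_filter_subtype {n : ℕ} (i₀ : Fin n) (P : Fin n → Prop) [DecidablePred P] :
    ((Finset.univ : Finset {i : Fin n // i ≠ i₀}).filter fun i => P i.1).card
      = ((Finset.univ.erase i₀).filter P).card := by
  apply Finset.card_nbij (fun a => a.1)
  · intro a ha
    simp only [mem_coe, mem_filter, mem_univ, true_and] at ha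
    simp [mem_erase, a.2, ha]
  · intro a _ b _ h
    exact Subtype.ext h
  · intro b hb
    simp only [coe_filter, mem_erase, mem_univ, true_and, Set.mem_setOf_eq, mem_coe] at hb
    exact ⟨⟨b, hb.1.1⟩, by simp [hb.1.2, hb.2], rfl⟩

theorem stmt6 (q n t : ℕ) (hq : 2 ≤ q) (hn : 1 ≤ n) (ht : 1 ≤ t) (htn : t ≤ n)
    (x y : Fin n → Fin q) (hxy : hammingDist x y = 1) :
    (ball x t ∩ ball y t).card = q * V q (n - 1) (t - 1) := by
  classical
  obtain ⟨i₀, hD⟩ := Finset.card_eq_one.mp (by simpa [hammingDist] using hxy)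
  have hne : x i₀ ≠ y i₀ := by
    have : i₀ ∈ Finset.univ.filter (fun i => x i ≠ y i) := hD ▸ Finset.mem_singleton_self i₀
    simpa using this
  have heqxy : ∀ i, i ≠ i₀ → x i = y i := by
    intro i hi
    by_contra h
    have : i ∈ ({i₀} : Finset (Fin n)) := hD ▸ (by simpa using h)
    exact hi (Finset.mem_singleton.mp this)
  -- decomposition of distance
  have key : ∀ (w z : Fin n → Fin q),
      (Finset.univ.filter fun i => w i ≠ z i).card =
        ((Finset.univ.erase i₀).filter fun i => w i ≠ z i).card
          + (if w i₀ ≠ z i₀ then 1 else 0) := by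
    intro w z
    conv_lhs => rw [← Finset.insert_erase (Finset.mem_univ i₀)]
    rw [Finset.filter_insert]
    split_ifs with h
    · rw [Finset.card_insert_of_notMem (by simp)]
    · rfl
  have hset : ball x t ∩ ball y t = Finset.univ.filter
      (fun z => ((Finset.univ.erase i₀).filter fun i => x i ≠ z i).card ≤ t - 1) := by
    ext z
    simp only [ball, Finset.mem_inter, mem_filter, mem_univ, true_and, hammingDist]
    rw [key x z, key y z]
    have hcc : ((Finset.univ.erase i₀).filter fun i => y i ≠ z i)
        = ((Finset.univ.erase i₀).filter fun i => x i ≠ z i) := by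
      apply Finset.filter_congr
      intro i hi
      rw [heqxy i (Finset.mem_erase.mp hi).1]
    rw [hcc]
    by_cases h1 : x i₀ ≠ z i₀ <;> by_cases h2 : y i₀ ≠ z i₀
    · simp only [if_pos h1, if_pos h2]; omega
    · simp only [if_pos h1, if_neg h2]; omega
    · simp only [if_neg h1, if_pos h2]; omega
    · simp only [if_neg h1, if_neg h2]
      push_neg at h1 h2
      exact absurd (h1.trans h2.symm) hne
  rw [hset]
  have hcount : (Finset.univ.filter
      (fun z : Fin n → Fin q =>
        ((Finset.univ.erase i₀).filter fun i => x i ≠ z i).card ≤ t - 1)).card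
      = ((Finset.univ : Finset (Fin q)) ×ˢ (Finset.univ.filter
          fun w : {i : Fin n // i ≠ i₀} → Fin q =>
            hammingDist (fun i => x i.1) w ≤ t - 1)).card := by
    apply Finset.card_nbij' (fun z => (z i₀, fun i => z i.1))
      (fun p => fun i => if h : i = i₀ then p.1 else p.2 ⟨i, h⟩)
    · intro z hz
      simp only [mem_coe, mem_filter, mem_univ, true_and] at hz
      simp only [mem_coe, Finset.mem_product, mem_filter, mem_univ, true_and, hammingDist]
      rw [card_filter_subtype i₀ (fun i => x i ≠ z i)]
      exact hz
    · rintro ⟨v, w⟩ hp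
      simp only [mem_coe, Finset.mem_product, mem_filter, mem_univ, true_and, hammingDist] at hp
      simp only [mem_coe, mem_filter, mem_univ, true_and]
      have hfc : ((Finset.univ.erase i₀).filter fun i =>
          x i ≠ (fun i => if h : i = i₀ then v else w ⟨i, h⟩) i)
          = ((Finset.univ.erase i₀).filter fun i =>
              (fun i : Fin n => x i ≠ if h : i = i₀ then v else w ⟨i, h⟩) i) := rfl
      rw [hfc, ← card_filter_subtype i₀]
      have : ((Finset.univ : Finset {i : Fin n // i ≠ i₀}).filter fun i =>
          x i.1 ≠ if h : i.1 = i₀ then v else w ⟨i.1, h⟩)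
          = ((Finset.univ : Finset {i : Fin n // i ≠ i₀}).filter fun i =>
              (fun j : {i : Fin n // i ≠ i₀} => x j.1) i ≠ w i) := by
        apply Finset.filter_congr
        intro i _
        rw [dif_neg i.2]
      rw [this]
      exact hp
    · intro z _
      funext i
      by_cases h : i = i₀
      · subst h; simp
      · simp [h]
    · rintro ⟨v, w⟩ _
      simp only [Prod.mk.injEq]
      constructor
      · simp
      · funext i
        simp [i.2]
  rw [hcount, Finset.card_product, Finset.card_univ, Fintype.card_fin,
    ball_card' (fun i : {i : Fin n // i ≠ i₀} => x i.1) (t - 1)]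
  have hcard : Fintype.card {i : Fin n // i ≠ i₀} = n - 1 := by
    have := Fintype.card_subtype_compl (fun i : Fin n => i = i₀)
    simp only [Fintype.card_subtype_eq, Fintype.card_fin] at this
    exact this
  rw [hcard, V]
end

section
/- Let W_q(n, t, k) denote the cardinality of the intersection of two radius-t Hamming balls in [q]^n whose centers are at Hamming distance k. Then W_q(n, t, k) is nonincreasing in k: for every 0 ≤ k ≤ t (with k+1 ≤ n), W_q(n, t, k+1) ≤ W_q(n, t, k). -/
/-- The standard vector whose first `k` coordinates are `1` and the rest are `0`. -/
def stdVec (q n : ℕ) [NeZero q] (k : ℕ) : Fin n → Fin q :=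
  fun i => if (i : ℕ) < k then 1 else 0

/-- `W q n t k`: the size of the intersection of two radius-`t` Hamming balls in `[q]^n`
whose centers are at Hamming distance `k` (for `k ≤ n` and `q ≥ 2`). -/
def W (q n : ℕ) [NeZero q] (t k : ℕ) : ℕ :=
  (ball (stdVec q n 0) t ∩ ball (stdVec q n k) t).card

lemma hd_eq_sum {q n : ℕ} (x y : Fin n → Fin q) :
    hammingDist x y = ∑ i, if x i ≠ y i then 1 else 0 := by
  rw [hammingDist, Finset.card_filter]

lemma hd_update {q n : ℕ} (x y : Fin n → Fin q) (j : Fin n) (a : Fin q) :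
    hammingDist x (Function.update y j a) + (if x j ≠ y j then 1 else 0) =
    hammingDist x y + (if x j ≠ a then 1 else 0) := by
  classical
  rw [hd_eq_sum, hd_eq_sum]
  have h1 : (fun i => if x i ≠ Function.update y j a i then 1 else 0) =
      Function.update (fun i => if x i ≠ y i then (1:ℕ) else 0) j (if x j ≠ a then 1 else 0) := by
    funext i
    by_cases hij : i = j
    · subst hij; simp
    · simp [Function.update_of_ne hij]
  rw [h1, Finset.sum_update_of_mem (Finset.mem_univ j),
    ← Finset.add_sum_erase _ _ (Finset.mem_univ j)]
  rw [Finset.sdiff_singleton_eq_erase]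
  omega

lemma hdA {q n : ℕ} (x y : Fin n → Fin q) (j : Fin n) (a : Fin q)
    (h1 : x j = a) (h2 : x j ≠ y j) :
    hammingDist x (Function.update y j a) + 1 = hammingDist x y := by
  have h := hd_update x y j a
  rw [if_pos h2, if_neg (by simpa using h1)] at h
  omega

lemma hdB {q n : ℕ} (x y : Fin n → Fin q) (j : Fin n) (a : Fin q)
    (h1 : x j ≠ a) :
    hammingDist x y ≤ hammingDist x (Function.update y j a) := by
  have h := hd_update x y j a
  rw [if_pos h1] at h
  have hc : (if x j ≠ y j then 1 else 0) ≤ 1 := by split <;> simp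
  omega

lemma hdC {q n : ℕ} (x y : Fin n → Fin q) (j : Fin n) (a : Fin q)
    (h1 : x j = y j) (h2 : x j ≠ a) :
    hammingDist x (Function.update y j a) = hammingDist x y + 1 := by
  have h := hd_update x y j a
  rw [if_pos h2, if_neg (by simpa using h1)] at h
  omega

theorem stmt8 (q n t : ℕ) [NeZero q] (hq : 2 ≤ q) (hn : 1 ≤ n) (k : ℕ)
    (hkt : k ≤ t) (hkn : k + 1 ≤ n) :
    W q n t (k + 1) ≤ W q n t k := by
  classical
  have h1 : (1 : Fin q) ≠ 0 := by
    intro h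
    have := congrArg Fin.val h
    rw [Fin.val_one'] at this
    simp [Nat.mod_eq_of_lt (by omega : 1 < q)] at this
  let j : Fin n := ⟨k, hkn⟩
  have huj : stdVec q n k j = 0 := by simp [stdVec, j]
  have hoj : stdVec q n 0 j = 0 := by simp [stdVec]
  have hvj : stdVec q n (k+1) j = 1 := by simp [stdVec, j]
  have hvu : stdVec q n (k+1) = Function.update (stdVec q n k) j 1 := by
    funext i
    by_cases hij : i = j
    · subst hij; simpa [j] using hvj
    · have hik : (i : ℕ) ≠ k := fun h => hij (Fin.ext h)
      rw [Function.update_of_ne hij]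
      simp only [stdVec]
      have : ((i:ℕ) < k+1) ↔ ((i:ℕ) < k) := by omega
      simp [this]
  have hmem : ∀ (c : Fin n → Fin q) z r, z ∈ ball c r ↔ hammingDist c z ≤ r := by
    intro c z r; simp [ball]
  -- key facts about elements in the "else" branch
  have zfact : ∀ z : Fin n → Fin q, hammingDist (stdVec q n (k+1)) z ≤ t →
      ¬ hammingDist (stdVec q n k) z ≤ t →
      z j = 1 ∧ hammingDist (stdVec q n k) z = hammingDist (stdVec q n (k+1)) z + 1 := by
    intro z hzv hcase
    have hzj : z j = 1 := by
      by_contra hne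
      apply hcase
      have hB := hdB z (stdVec q n k) j 1 hne
      rw [← hvu, hammingDist_comm z, hammingDist_comm z] at hB
      exact hB.trans hzv
    have hA := hdA z (stdVec q n k) j 1 hzj (by rw [huj, hzj]; exact h1)
    rw [← hvu, hammingDist_comm z, hammingDist_comm z] at hA
    exact ⟨hzj, by omega⟩
  rw [W, W]
  apply Finset.card_le_card_of_injOn
    (fun z => if hammingDist (stdVec q n k) z ≤ t then z else Function.update z j 0)
  · intro z hz
    rw [Finset.mem_coe, Finset.mem_inter, hmem, hmem] at hz ⊢
    obtain ⟨hzo, hzv⟩ := hz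
    by_cases hcase : hammingDist (stdVec q n k) z ≤ t
    · simp only [if_pos hcase]
      exact ⟨hzo, hcase⟩
    · simp only [if_neg hcase]
      obtain ⟨hzj, hd⟩ := zfact z hzv hcase
      constructor
      · have hA := hdA (stdVec q n 0) z j 0 hoj (by rw [hoj, hzj]; exact h1.symm)
        omega
      · have hA := hdA (stdVec q n k) z j 0 huj (by rw [huj, hzj]; exact h1.symm)
        omega
  · intro z1 hz1 z2 hz2 heq
    simp only at heq
    rw [Finset.mem_coe, Finset.mem_inter, hmem, hmem] at hz1 hz2
    by_cases hc1 : hammingDist (stdVec q n k) z1 ≤ t <;>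
      by_cases hc2 : hammingDist (stdVec q n k) z2 ≤ t
    · simpa [if_pos hc1, if_pos hc2] using heq
    · exfalso
      rw [if_pos hc1, if_neg hc2] at heq
      obtain ⟨hz2j, hd2⟩ := zfact z2 hz2.2 hc2
      have hC := hdC (stdVec q n (k+1)) z2 j 0 (by rw [hvj, hz2j]) (by rw [hvj]; exact h1)
      rw [← heq] at hC
      have := hz1.2
      omega
    · exfalso
      rw [if_neg hc1, if_pos hc2] at heq
      obtain ⟨hz1j, hd1⟩ := zfact z1 hz1.2 hc1
      have hC := hdC (stdVec q n (k+1)) z1 j 0 (by rw [hvj, hz1j]) (by rw [hvj]; exact h1)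
      rw [heq] at hC
      have := hz2.2
      omega
    · rw [if_neg hc1, if_neg hc2] at heq
      obtain ⟨hz1j, _⟩ := zfact z1 hz1.2 hc1
      obtain ⟨hz2j, _⟩ := zfact z2 hz2.2 hc2
      funext i
      by_cases hij : i = j
      · subst hij; rw [hz1j, hz2j]
      · have := congrFun heq i
        rwa [Function.update_of_ne hij, Function.update_of_ne hij] at this
end

section
/- With W_q(n, t, k) the size of the intersection of two radius-t Hamming balls at center distance k, one has the exact formula W_q(n,t,k) = ∑_{r=0}^{k} ∑_{s=0}^{k−r} C(k,r)·C(k−r,s)·(q−2)^{k−r−s}·V_q(n−k, t−max{k−r, k−s}), where V_q(m, j) = 0 when j < 0. -/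
open Finset

set_option linter.unusedVariables false


/-- `Vz q m j`: Hamming ball volume allowing a (possibly negative) integer radius;
it is `0` when `j < 0`. -/
def Vz (q m : ℕ) (j : ℤ) : ℕ :=
  if j < 0 then 0 else ∑ i ∈ Finset.range (j.toNat + 1), Nat.choose m i * (q - 1) ^ i


set_option linter.unusedSectionVars false
section aux
variable {q : ℕ} [NeZero q]

lemma hd_def {n : ℕ} (x y : Fin n → Fin q) :
    hammingDist x y = (univ.filter (fun i => x i ≠ y i)).card := rfl

lemma pattern_card {n : ℕ} (S : Fin n → Finset (Fin q)) :
    (univ.filter (fun w : Fin n → Fin q => ∀ i, w i ∈ S i)).card = ∏ i, (S i).card := by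
  rw [show (univ.filter (fun w : Fin n → Fin q => ∀ i, w i ∈ S i)) = Fintype.piFinset S by
    ext w; simp [Fintype.mem_piFinset]]
  exact Fintype.card_piFinset S

lemma hd0 {m : ℕ} (w : Fin m → Fin q) :
    hammingDist 0 w = (univ.filter (fun x => w x ≠ 0)).card := by
  rw [hd_def]; congr 1; ext x; simp [ne_comm]

lemma card_erase0 : (univ.erase (0 : Fin q)).card = q - 1 := by
  rw [Finset.card_erase_of_mem (mem_univ _), card_univ, Fintype.card_fin]

lemma exactWeight (m i : ℕ) :
    (univ.filter (fun w : Fin m → Fin q => hammingDist 0 w = i)).card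
      = Nat.choose m i * (q - 1) ^ i := by
  rw [Finset.card_eq_sum_card_fiberwise
    (f := fun w : Fin m → Fin q => univ.filter (fun x => w x ≠ 0))
    (t := Finset.powersetCard i univ)
    (fun w hw => by
      rw [Finset.mem_coe, mem_powersetCard_univ]
      rw [Finset.mem_coe, mem_filter] at hw
      rw [← hd0]; exact hw.2)]
  have key : ∀ A ∈ Finset.powersetCard i (univ : Finset (Fin m)),
      ((univ.filter (fun w : Fin m → Fin q => hammingDist 0 w = i)).filter
        (fun w => univ.filter (fun x => w x ≠ 0) = A)).card = (q-1)^i := by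
    intro A hA
    rw [mem_powersetCard_univ] at hA
    have hset : (univ.filter (fun w : Fin m → Fin q => hammingDist 0 w = i)).filter
        (fun w => univ.filter (fun x => w x ≠ 0) = A)
        = univ.filter (fun w : Fin m → Fin q =>
            ∀ x, w x ∈ if x ∈ A then univ.erase 0 else {0}) := by
      ext w
      simp only [mem_filter, mem_univ, true_and]
      constructor
      · rintro ⟨-, rfl⟩ x
        by_cases hx : w x = 0 <;> simp [hx]
      · intro h
        have hsupp : univ.filter (fun x => w x ≠ 0) = A := by
          ext x
          simp only [mem_filter, mem_univ, true_and]
          constructor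
          · intro hx
            by_contra hxA
            have := h x
            simp [hxA] at this
            exact hx this
          · intro hxA
            have := h x
            simp [hxA] at this
            exact this
        exact ⟨by rw [hd0, hsupp, hA], hsupp⟩
    rw [hset, pattern_card]
    have : ∀ x : Fin m, ((if x ∈ A then univ.erase (0 : Fin q) else {0}).card)
        = if x ∈ A then q - 1 else 1 := by
      intro x; by_cases hx : x ∈ A <;> simp [hx, card_erase0]
    rw [Finset.prod_congr rfl (fun x _ => this x), Finset.prod_ite_mem, univ_inter,
      Finset.prod_const, hA]
  rw [Finset.sum_congr rfl key, Finset.sum_const, Finset.card_powersetCard, card_univ,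
    Fintype.card_fin, smul_eq_mul]

lemma ballVol (m j : ℕ) :
    (univ.filter (fun w : Fin m → Fin q => hammingDist 0 w ≤ j)).card
      = ∑ i ∈ range (j+1), Nat.choose m i * (q - 1) ^ i := by
  rw [Finset.card_eq_sum_card_fiberwise (f := fun w => hammingDist 0 w) (t := range (j+1))
      (fun w hw => by rw [Finset.mem_coe, mem_filter] at hw; exact Finset.mem_coe.mpr (mem_range.mpr (Nat.lt_succ_of_le hw.2)))]
  refine Finset.sum_congr rfl fun i hi => ?_
  rw [mem_range] at hi
  rw [Finset.filter_filter, ← exactWeight (q := q) m i]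
  congr 1
  ext w
  simp only [mem_filter, mem_univ, true_and]
  constructor
  · exact fun h => h.2
  · intro h; exact ⟨by omega, h⟩

lemma interCount (m t a b : ℕ) :
    (univ.filter (fun w : Fin m → Fin q =>
        a + hammingDist 0 w ≤ t ∧ b + hammingDist 0 w ≤ t)).card
      = Vz q m ((t:ℤ) - max (a:ℤ) (b:ℤ)) := by
  rw [show max (a:ℤ) (b:ℤ) = ((max a b : ℕ) : ℤ) from (Nat.cast_max ..).symm]
  by_cases h : max a b ≤ t
  · have hset : (univ.filter (fun w : Fin m → Fin q =>
        a + hammingDist 0 w ≤ t ∧ b + hammingDist 0 w ≤ t))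
      = univ.filter (fun w => hammingDist 0 w ≤ t - max a b) := by
      ext w; simp only [mem_filter, mem_univ, true_and]; omega
    rw [hset, ballVol, Vz, if_neg (by omega)]
    congr 2
    omega
  · rw [Vz, if_pos (by omega)]
    rw [Finset.card_eq_zero, Finset.filter_eq_empty_iff]
    intro w _
    omega

end aux

section aux2
variable {q : ℕ} [NeZero q]

lemma zero_ne_one_fin (hq : 2 ≤ q) : (0 : Fin q) ≠ 1 := by
  intro h
  have h0 : ((0 : Fin q) : ℕ) = 0 := rfl
  have h1 : ((1 : Fin q) : ℕ) = 1 % q := Fin.val_one' q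
  rw [h] at h0
  rw [Nat.mod_eq_of_lt (by omega)] at h1
  omega

lemma card_erase01 (hq : 2 ≤ q) : (((univ.erase (0 : Fin q))).erase 1).card = q - 2 := by
  rw [Finset.card_erase_of_mem (Finset.mem_erase.mpr ⟨(zero_ne_one_fin hq).symm, mem_univ _⟩),
    card_erase0]
  omega

lemma classCount (k r s : ℕ) (hq : 2 ≤ q) (hrs : r + s ≤ k) :
    (univ.filter (fun z : Fin k → Fin q =>
        (univ.filter (fun i => z i = 0)).card = r ∧
        (univ.filter (fun i => z i = 1)).card = s)).card
      = Nat.choose k r * Nat.choose (k-r) s * (q - 2) ^ (k - r - s) := by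
  classical
  set T : Finset ((_ : Finset (Fin k)) × Finset (Fin k)) :=
    (Finset.powersetCard r univ).sigma (fun A => Finset.powersetCard s (univ \ A)) with hT
  rw [Finset.card_eq_sum_card_fiberwise
    (f := fun z : Fin k → Fin q =>
      (⟨univ.filter (fun i => z i = 0), univ.filter (fun i => z i = 1)⟩ :
        (_ : Finset (Fin k)) × Finset (Fin k)))
    (t := T)
    (fun z hz => by
      rw [Finset.mem_coe, mem_filter] at hz
      rw [Finset.mem_coe, hT, Finset.mem_sigma]
      refine ⟨mem_powersetCard_univ.mpr hz.2.1, Finset.mem_powersetCard.mpr ⟨?_, hz.2.2⟩⟩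
      intro x hx
      rw [mem_filter] at hx
      rw [Finset.mem_sdiff, mem_filter]
      exact ⟨mem_univ _, by
        intro hmem
        exact zero_ne_one_fin hq (hmem.2.symm.trans hx.2)⟩)]
  have key : ∀ p ∈ T,
      ((univ.filter (fun z : Fin k → Fin q =>
        (univ.filter (fun i => z i = 0)).card = r ∧
        (univ.filter (fun i => z i = 1)).card = s)).filter
        (fun z => (⟨univ.filter (fun i => z i = 0), univ.filter (fun i => z i = 1)⟩ :
          (_ : Finset (Fin k)) × Finset (Fin k)) = p)).card = (q - 2) ^ (k - r - s) := by
    rintro ⟨A, B⟩ hp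
    rw [hT, Finset.mem_sigma, mem_powersetCard_univ, Finset.mem_powersetCard] at hp
    obtain ⟨hA, hBsub, hB⟩ := hp
    have hAB : Disjoint A B := by
      rw [Finset.disjoint_left]
      intro x hxA hxB
      have := hBsub hxB
      rw [Finset.mem_sdiff] at this
      exact this.2 hxA
    have hset : (univ.filter (fun z : Fin k → Fin q =>
        (univ.filter (fun i => z i = 0)).card = r ∧
        (univ.filter (fun i => z i = 1)).card = s)).filter
        (fun z => (⟨univ.filter (fun i => z i = 0), univ.filter (fun i => z i = 1)⟩ :
          (_ : Finset (Fin k)) × Finset (Fin k)) = ⟨A, B⟩)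
        = univ.filter (fun z : Fin k → Fin q => ∀ x, z x ∈
            if x ∈ A then {0} else if x ∈ B then {1} else (univ.erase 0).erase 1) := by
      ext z
      simp only [mem_filter, mem_univ, true_and]
      constructor
      · rintro ⟨-, hp⟩ x
        obtain ⟨hZ, hO'⟩ := Sigma.mk.inj_iff.mp hp
        have hO := eq_of_heq hO'
        by_cases hxA : x ∈ A
        · have h0 : z x = 0 := by
            have h := hxA; rw [← hZ, mem_filter] at h; exact h.2
          simp [hxA, h0]
        · by_cases hxB : x ∈ B
          · have h1 : z x = 1 := by
              have h := hxB; rw [← hO, mem_filter] at h; exact h.2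
            simp [hxA, hxB, h1]
          · have h0 : z x ≠ 0 := by
              intro hc
              exact hxA (by rw [← hZ, mem_filter]; exact ⟨mem_univ _, hc⟩)
            have h1 : z x ≠ 1 := by
              intro hc
              exact hxB (by rw [← hO, mem_filter]; exact ⟨mem_univ _, hc⟩)
            simp [hxA, hxB, Finset.mem_erase, h0, h1]
      · intro h
        have hZ : univ.filter (fun i => z i = 0) = A := by
          ext x
          simp only [mem_filter, mem_univ, true_and]
          constructor
          · intro hx
            by_contra hxA
            have := h x
            simp only [if_neg hxA] at this
            by_cases hxB : x ∈ B
            · rw [if_pos hxB, Finset.mem_singleton] at this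
              exact zero_ne_one_fin hq (hx.symm.trans this)
            · rw [if_neg hxB, Finset.mem_erase, Finset.mem_erase] at this
              exact this.2.1 hx
          · intro hxA
            have := h x
            rw [if_pos hxA, Finset.mem_singleton] at this
            exact this
        have hO : univ.filter (fun i => z i = 1) = B := by
          ext x
          simp only [mem_filter, mem_univ, true_and]
          constructor
          · intro hx
            by_contra hxB
            have := h x
            by_cases hxA : x ∈ A
            · rw [if_pos hxA, Finset.mem_singleton] at this
              exact zero_ne_one_fin hq (this.symm.trans hx)
            · rw [if_neg hxA, if_neg hxB, Finset.mem_erase, Finset.mem_erase] at this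
              exact this.1 hx
          · intro hxB
            have := h x
            rw [if_neg (fun hxA => (Finset.disjoint_left.mp hAB hxA) hxB), if_pos hxB,
              Finset.mem_singleton] at this
            exact this
        exact ⟨⟨by rw [hZ, hA], by rw [hO, hB]⟩, by rw [hZ, hO]⟩
    rw [hset, pattern_card]
    have hcard : ∀ x : Fin k,
        ((if x ∈ A then ({0} : Finset (Fin q)) else if x ∈ B then {1}
          else (univ.erase 0).erase 1).card)
        = if x ∈ univ \ (A ∪ B) then q - 2 else 1 := by
      intro x
      by_cases hxA : x ∈ A
      · simp [hxA]
      · by_cases hxB : x ∈ B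
        · simp [hxA, hxB]
        · simp [hxA, hxB, card_erase01 hq]
    rw [Finset.prod_congr rfl (fun x _ => hcard x), Finset.prod_ite_mem, univ_inter,
      Finset.prod_const]
    congr 1
    rw [Finset.card_sdiff_of_subset (Finset.subset_univ _), Finset.card_union_of_disjoint hAB,
      card_univ, Fintype.card_fin, hA, hB]
    omega
  rw [Finset.sum_congr rfl key, Finset.sum_const, smul_eq_mul, hT, Finset.card_sigma]
  have : ∀ A ∈ Finset.powersetCard r (univ : Finset (Fin k)),
      (Finset.powersetCard s ((univ : Finset (Fin k)) \ A)).card = Nat.choose (k - r) s := by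
    intro A hA
    rw [mem_powersetCard_univ] at hA
    rw [Finset.card_powersetCard, Finset.card_sdiff_of_subset (Finset.subset_univ _), card_univ,
      Fintype.card_fin, hA]
  rw [Finset.sum_congr rfl this, Finset.sum_const, smul_eq_mul, Finset.card_powersetCard,
    card_univ, Fintype.card_fin, mul_assoc]
end aux2

section aux3
variable {q : ℕ} [NeZero q]

lemma dist_append {k m : ℕ} (x : Fin (k+m) → Fin q) (z : Fin k → Fin q) (w : Fin m → Fin q) :
    hammingDist x (Fin.append z w)
      = hammingDist (fun i => x (Fin.castAdd m i)) z
        + hammingDist (fun j => x (Fin.natAdd k j)) w := by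
  rw [hd_def, hd_def, hd_def, Finset.card_filter, Finset.card_filter, Finset.card_filter,
    Fin.sum_univ_add]
  simp [Fin.append_left, Fin.append_right]

lemma stdVec_zero_left (k m : ℕ) :
    (fun i : Fin k => stdVec q (k+m) 0 (Fin.castAdd m i)) = 0 := by
  funext i; simp [stdVec]

lemma stdVec_zero_right (k m : ℕ) :
    (fun j : Fin m => stdVec q (k+m) 0 (Fin.natAdd k j)) = 0 := by
  funext j; simp [stdVec]

lemma stdVec_k_left (k m : ℕ) :
    (fun i : Fin k => stdVec q (k+m) k (Fin.castAdd m i)) = (fun _ => 1) := by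
  funext i; simp [stdVec, i.isLt]

lemma stdVec_k_right (k m : ℕ) :
    (fun j : Fin m => stdVec q (k+m) k (Fin.natAdd k j)) = 0 := by
  funext j; simp [stdVec]

lemma main' (k m t : ℕ) (hq : 2 ≤ q) :
    W q (k+m) t k =
      ∑ r ∈ Finset.range (k + 1), ∑ s ∈ Finset.range (k - r + 1),
        Nat.choose k r * Nat.choose (k - r) s * (q - 2) ^ (k - r - s) *
          Vz q m ((t : ℤ) - max ((k : ℤ) - r) ((k : ℤ) - s)) := by
  classical
  have hW : W q (k+m) t k = (univ.filter (fun y : Fin (k+m) → Fin q =>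
      hammingDist (stdVec q (k+m) 0) y ≤ t ∧ hammingDist (stdVec q (k+m) k) y ≤ t)).card := by
    rw [W, ball, ball, ← Finset.filter_and]
  rw [hW, Finset.card_filter]
  rw [← Fintype.sum_equiv (Fin.appendEquiv k m)
    (fun p => if hammingDist (stdVec q (k+m) 0) (Fin.appendEquiv k m p) ≤ t ∧
        hammingDist (stdVec q (k+m) k) (Fin.appendEquiv k m p) ≤ t then 1 else 0)
    _ (fun p => rfl)]
  rw [Fintype.sum_prod_type]
  have hterm : ∀ (z : Fin k → Fin q) (w : Fin m → Fin q),
      (hammingDist (stdVec q (k+m) 0) (Fin.appendEquiv k m (z, w)) ≤ t ∧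
        hammingDist (stdVec q (k+m) k) (Fin.appendEquiv k m (z, w)) ≤ t)
      ↔ (hammingDist 0 z + hammingDist 0 w ≤ t ∧
          hammingDist (fun _ => 1) z + hammingDist 0 w ≤ t) := by
    intro z w
    rw [show Fin.appendEquiv k m (z, w) = Fin.append z w from rfl,
      dist_append, dist_append, stdVec_zero_left, stdVec_zero_right,
      stdVec_k_left, stdVec_k_right]
  have hinner : ∀ z : Fin k → Fin q,
      (∑ w : Fin m → Fin q,
        if hammingDist (stdVec q (k+m) 0) (Fin.appendEquiv k m (z, w)) ≤ t ∧
          hammingDist (stdVec q (k+m) k) (Fin.appendEquiv k m (z, w)) ≤ t then 1 else 0)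
      = Vz q m ((t:ℤ) - max ((hammingDist 0 z : ℕ) : ℤ) ((hammingDist (fun _ => 1) z : ℕ) : ℤ)) := by
    intro z
    rw [← interCount m t (hammingDist 0 z) (hammingDist (fun _ => 1) z), Finset.card_filter]
    refine Finset.sum_congr rfl fun w _ => ?_
    rw [if_congr (hterm z w) rfl rfl]
  rw [Finset.sum_congr rfl (fun z _ => hinner z)]
  have hd0k : ∀ z : Fin k → Fin q,
      hammingDist 0 z + (univ.filter (fun i => z i = 0)).card = k := by
    intro z
    rw [hd0, show (univ.filter (fun i => z i = 0))
        = univ.filter (fun i => ¬ (z i ≠ 0)) by ext i; simp,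
      Finset.card_filter_add_card_filter_not, card_univ, Fintype.card_fin]
  have hd1k : ∀ z : Fin k → Fin q,
      hammingDist (fun _ => (1 : Fin q)) z + (univ.filter (fun i => z i = 1)).card = k := by
    intro z
    rw [hd_def, show (univ.filter (fun i => z i = 1))
        = univ.filter (fun i => ¬ ((fun _ => (1 : Fin q)) i ≠ z i)) by ext i; simp [eq_comm],
      Finset.card_filter_add_card_filter_not, card_univ, Fintype.card_fin]
  have hmaps : ∀ z : Fin k → Fin q, z ∈ (univ : Finset (Fin k → Fin q)) →
      (⟨(univ.filter (fun i => z i = 0)).card, (univ.filter (fun i => z i = 1)).card⟩ :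
        (_ : ℕ) × ℕ) ∈ (Finset.range (k+1)).sigma (fun r => Finset.range (k - r + 1)) := by
    intro z _
    have hdisj : Disjoint (univ.filter (fun i => z i = 0)) (univ.filter (fun i => z i = 1)) := by
      rw [Finset.disjoint_left]
      intro x hx0 hx1
      rw [mem_filter] at hx0 hx1
      exact zero_ne_one_fin hq (hx0.2.symm.trans hx1.2)
    have hle := Finset.card_le_card (Finset.subset_univ
      ((univ.filter (fun i => z i = 0)) ∪ (univ.filter (fun i => z i = 1))))
    rw [Finset.card_union_of_disjoint hdisj, card_univ, Fintype.card_fin] at hle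
    exact Finset.mem_sigma.mpr
      ⟨Finset.mem_range.mpr (show (univ.filter (fun i => z i = 0)).card < k + 1 by omega),
       Finset.mem_range.mpr (show (univ.filter (fun i => z i = 1)).card <
          k - (univ.filter (fun i => z i = 0)).card + 1 by omega)⟩
  rw [← Finset.sum_fiberwise_of_maps_to hmaps
    (fun z => Vz q m ((t:ℤ) - max ((hammingDist 0 z : ℕ) : ℤ)
      ((hammingDist (fun _ => (1 : Fin q)) z : ℕ) : ℤ)))]
  rw [Finset.sum_sigma]
  refine Finset.sum_congr rfl fun r hr => ?_
  rw [Finset.mem_range] at hr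
  refine Finset.sum_congr rfl fun s hs => ?_
  rw [Finset.mem_range] at hs
  have hconst : ∀ z ∈ (univ : Finset (Fin k → Fin q)).filter (fun z =>
      (⟨(univ.filter (fun i => z i = 0)).card, (univ.filter (fun i => z i = 1)).card⟩ :
        (_ : ℕ) × ℕ) = ⟨r, s⟩),
      Vz q m ((t:ℤ) - max ((hammingDist 0 z : ℕ) : ℤ)
        ((hammingDist (fun _ => (1 : Fin q)) z : ℕ) : ℤ))
      = Vz q m ((t : ℤ) - max ((k : ℤ) - r) ((k : ℤ) - s)) := by
    intro z hz
    rw [mem_filter] at hz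
    have h0 : (univ.filter (fun i => z i = 0)).card = r :=
      congrArg (fun p : (_ : ℕ) × ℕ => p.fst) hz.2
    have h1 : (univ.filter (fun i => z i = 1)).card = s :=
      congrArg (fun p : (_ : ℕ) × ℕ => p.snd) hz.2
    have e0 := hd0k z
    have e1 := hd1k z
    rw [show ((hammingDist 0 z : ℕ) : ℤ) = (k : ℤ) - r by omega,
      show ((hammingDist (fun _ => (1 : Fin q)) z : ℕ) : ℤ) = (k : ℤ) - s by omega]
  rw [Finset.sum_congr rfl hconst, Finset.sum_const, smul_eq_mul]
  have hfib : (univ : Finset (Fin k → Fin q)).filter (fun z =>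
      (⟨(univ.filter (fun i => z i = 0)).card, (univ.filter (fun i => z i = 1)).card⟩ :
        (_ : ℕ) × ℕ) = ⟨r, s⟩)
      = univ.filter (fun z : Fin k → Fin q =>
        (univ.filter (fun i => z i = 0)).card = r ∧
        (univ.filter (fun i => z i = 1)).card = s) := by
    ext z
    simp only [mem_filter, mem_univ, true_and]
    constructor
    · intro h
      obtain ⟨h0, h1'⟩ := Sigma.mk.inj_iff.mp h
      exact ⟨h0, eq_of_heq h1'⟩
    · rintro ⟨h0, h1⟩
      rw [h0, h1]
  rw [hfib, classCount k r s hq (by omega)]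
end aux3


theorem stmt9 (q n t k : ℕ) [NeZero q] (hq : 2 ≤ q) (hn : 1 ≤ n)
    (hkn : k ≤ n) (hkt : k ≤ 2 * t) :
    W q n t k =
      ∑ r ∈ Finset.range (k + 1), ∑ s ∈ Finset.range (k - r + 1),
        Nat.choose k r * Nat.choose (k - r) s * (q - 2) ^ (k - r - s) *
          Vz q (n - k) ((t : ℤ) - max ((k : ℤ) - r) ((k : ℤ) - s)) := by
  obtain ⟨m, rfl⟩ : ∃ m, n = k + m := ⟨n - k, by omega⟩
  rw [show k + m - k = m from by omega]
  exact main' k m t hq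
end

section
/- For every integer k ≥ 0 with 2k+1 ≤ n and t ≥ 1, the intersection volumes satisfy W_q(n, t, 2k+1) ≤ 2·(q²t/((q−1)n))^k · W_q(n, t, 1), where W_q(n, t, j) is the size of the intersection of two radius-t Hamming balls in [q]^n at center distance j. -/
open Finset

lemma card_filter_lt' (n j : ℕ) (h : j ≤ n) :
    (univ.filter (fun i : Fin n => (i:ℕ) < j)).card = j := by
  have : (univ.filter (fun i : Fin n => (i:ℕ) < j)) = Finset.map (Fin.castLEEmb h) univ := by
    ext i
    simp only [mem_filter, mem_univ, true_and, mem_map, Fin.castLEEmb, Fin.castLE]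
    constructor
    · intro hi; exact ⟨⟨i.val, hi⟩, by simp [Fin.ext_iff]⟩
    · rintro ⟨x, rfl⟩; simpa using x.isLt
  rw [this, card_map, card_univ, Fintype.card_fin]

lemma card_filter_ge' (n j : ℕ) (h : j ≤ n) :
    (univ.filter (fun i : Fin n => j ≤ (i:ℕ))).card = n - j := by
  have h2 := Finset.card_filter_add_card_filter_not (s := (univ : Finset (Fin n)))
    (p := fun i : Fin n => (i:ℕ) < j)
  rw [card_filter_lt' n j h] at h2
  simp only [not_lt] at h2
  simp only [card_univ, Fintype.card_fin] at h2
  omega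

lemma count_lemma (q n j r : ℕ) [NeZero q] (hj : j ≤ n) :
    (univ.filter (fun y : Fin n → Fin q =>
      (univ.filter (fun i : Fin n => j ≤ (i:ℕ) ∧ y i ≠ 0)).card ≤ r)).card
    = q ^ j * ∑ e ∈ Finset.range (r+1), (n - j).choose e * (q-1)^e := by
  classical
  set Pc : Finset (Fin n) := univ.filter (fun i : Fin n => j ≤ (i:ℕ)) with hPc
  have hPcCard : Pc.card = n - j := card_filter_ge' n j hj
  set block : Finset (Fin n) → Finset (Fin n → Fin q) := fun s =>
    Fintype.piFinset (fun i => if j ≤ (i:ℕ) then (if i ∈ s then univ.filter (fun x : Fin q => x ≠ 0) else {0}) else univ) with hblock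
  have hmem : ∀ s y, y ∈ block s ↔ ∀ i : Fin n, (j ≤ (i:ℕ) → (i ∈ s → y i ≠ 0) ∧ (i ∉ s → y i = 0)) := by
    intro s y
    rw [hblock]
    rw [Fintype.mem_piFinset]
    constructor
    · intro h i hji
      have := h i
      rw [if_pos hji] at this
      constructor
      · intro his; rw [if_pos his] at this; simpa using this
      · intro his; rw [if_neg his] at this; simpa using this
    · intro h i
      by_cases hji : j ≤ (i:ℕ)
      · rw [if_pos hji]
        by_cases his : i ∈ s
        · rw [if_pos his]; simpa using (h i hji).1 his
        · rw [if_neg his]; simpa using (h i hji).2 his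
      · rw [if_neg hji]; exact mem_univ _
  have hsupp : ∀ s ∈ Pc.powerset, ∀ y ∈ block s, Pc.filter (fun i => y i ≠ 0) = s := by
    intro s hs y hy
    rw [mem_powerset] at hs
    ext i
    simp only [mem_filter, hPc, mem_univ, true_and]
    constructor
    · rintro ⟨hji, hyi⟩
      by_contra his
      exact hyi (((hmem s y).1 hy i hji).2 his)
    · intro his
      have hji : j ≤ (i:ℕ) := by have := hs his; simpa [hPc] using this
      exact ⟨hji, ((hmem s y).1 hy i hji).1 his⟩
  have hT : (univ.filter (fun y : Fin n → Fin q =>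
      (univ.filter (fun i : Fin n => j ≤ (i:ℕ) ∧ y i ≠ 0)).card ≤ r))
      = (Pc.powerset.filter (fun s => s.card ≤ r)).biUnion block := by
    ext y
    simp only [mem_filter, mem_univ, true_and, mem_biUnion, mem_powerset]
    constructor
    · intro hcard
      refine ⟨Pc.filter (fun i => y i ≠ 0), ⟨filter_subset _ _, ?_⟩, ?_⟩
      · have : Pc.filter (fun i => y i ≠ 0) = univ.filter (fun i : Fin n => j ≤ (i:ℕ) ∧ y i ≠ 0) := by
          rw [hPc, filter_filter]
        rw [this]; exact hcard
      · rw [hmem]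
        intro i hji
        constructor
        · intro his
          have := (mem_filter.1 his).2
          exact this
        · intro his
          by_contra hyi
          exact his (by simp [hPc, mem_filter, hji, hyi])
    · rintro ⟨s, ⟨hs1, hs2⟩, hy⟩
      have := hsupp s (mem_powerset.2 hs1) y hy
      have heq : univ.filter (fun i : Fin n => j ≤ (i:ℕ) ∧ y i ≠ 0) = s := by
        rw [← this, hPc, filter_filter]
      rw [heq]; exact hs2
  have hdisj : ∀ s₁ ∈ Pc.powerset.filter (fun s => s.card ≤ r), ∀ s₂ ∈ Pc.powerset.filter (fun s => s.card ≤ r),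
      s₁ ≠ s₂ → Disjoint (block s₁) (block s₂) := by
    intro s₁ hs₁ s₂ hs₂ hne
    rw [Finset.disjoint_left]
    intro y hy₁ hy₂
    apply hne
    rw [← hsupp s₁ (mem_filter.1 hs₁).1 y hy₁, ← hsupp s₂ (mem_filter.1 hs₂).1 y hy₂]
  have hblockcard : ∀ s ∈ Pc.powerset, (block s).card = q^j * (q-1)^s.card := by
    intro s hs
    rw [mem_powerset] at hs
    rw [hblock]
    rw [Fintype.card_piFinset]
    have hcardpt : ∀ i : Fin n, ((if j ≤ (i:ℕ) then (if i ∈ s then univ.filter (fun x : Fin q => x ≠ 0) else ({0} : Finset (Fin q))) else univ)).card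
        = if j ≤ (i:ℕ) then (if i ∈ s then q-1 else 1) else q := by
      intro i
      by_cases hji : j ≤ (i:ℕ) <;> by_cases his : i ∈ s <;>
        simp [hji, his, Finset.filter_ne', Finset.card_erase_of_mem]
    simp only [hcardpt]
    rw [← Finset.prod_filter_mul_prod_filter_not univ (fun i : Fin n => j ≤ (i:ℕ))]
    have hA : (∏ i ∈ univ.filter (fun i : Fin n => j ≤ (i:ℕ)),
        (if j ≤ (i:ℕ) then (if i ∈ s then q-1 else 1) else q)) = (q-1)^s.card := by
      rw [Finset.prod_congr rfl (fun i hi => by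
        rw [if_pos (mem_filter.1 hi).2])]
      rw [← hPc, Finset.prod_ite_mem Pc s (fun _ => q-1)]
      rw [Finset.inter_eq_right.2 hs, Finset.prod_const]
    have hB : (∏ i ∈ univ.filter (fun i : Fin n => ¬ j ≤ (i:ℕ)),
        (if j ≤ (i:ℕ) then (if i ∈ s then q-1 else 1) else q)) = q^j := by
      rw [Finset.prod_congr rfl (fun i hi => by
        rw [if_neg (mem_filter.1 hi).2])]
      rw [Finset.prod_const]
      congr 1
      have : (univ.filter (fun i : Fin n => ¬ j ≤ (i:ℕ))) = (univ.filter (fun i : Fin n => (i:ℕ) < j)) := by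
        simp only [not_le]
      rw [this, card_filter_lt' n j hj]
    rw [hA, hB, mul_comm]
  rw [hT, Finset.card_biUnion hdisj]
  have hsplit : Pc.powerset.filter (fun s => s.card ≤ r)
      = (Finset.range (r+1)).biUnion (fun e => Finset.powersetCard e Pc) := by
    ext s
    simp only [mem_filter, mem_powerset, mem_biUnion, mem_range, Finset.mem_powersetCard]
    constructor
    · rintro ⟨h1, h2⟩; exact ⟨s.card, by omega, h1, rfl⟩
    · rintro ⟨e, he, h1, rfl⟩; exact ⟨h1, by omega⟩
  rw [hsplit]
  rw [Finset.sum_biUnion (by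
    intro e₁ he₁ e₂ he₂ hne
    simp only [Function.onFun]
    rw [Finset.disjoint_left]
    intro s hs₁ hs₂
    exact hne (by rw [← (Finset.mem_powersetCard.1 hs₁).2, ← (Finset.mem_powersetCard.1 hs₂).2]))]
  rw [Finset.mul_sum]
  apply Finset.sum_congr rfl
  intro e _
  have : ∀ s ∈ Finset.powersetCard e Pc, (block s).card = q^j * (q-1)^e := by
    intro s hs
    obtain ⟨h1, h2⟩ := Finset.mem_powersetCard.1 hs
    rw [hblockcard s (mem_powerset.2 h1), h2]
  rw [Finset.sum_congr rfl this, Finset.sum_const, Finset.card_powersetCard, hPcCard]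
  ring

lemma choose_ratio (S d : ℕ) :
    (S+1) * (d+1) * Nat.choose (S+d+2) (S+1) = (S+d+1) * (S+d+2) * Nat.choose (S+d) S := by
  have h1 : (S+d+1+1) * Nat.choose (S+d+1) S = Nat.choose (S+d+2) (S+1) * (S+1) :=
    Nat.add_one_mul_choose_eq (S+d+1) S
  have h2 : Nat.choose (S+d) S * (S+d+1) = Nat.choose (S+d+1) S * (S+d+1-S) :=
    Nat.choose_mul_succ_eq (S+d) S
  have h3 : S + d + 1 - S = d + 1 := by omega
  rw [h3] at h2
  nlinarith [h1, h2]

lemma step_ineq (S d τ j : ℕ) (h1 : S+1 ≤ τ) (h2 : τ ≤ d) (h3 : 2*τ ≤ S+d+1) :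
    (S+d+2*j+1) * Nat.choose (S+d) S ≤ (τ+j) * Nat.choose (S+d+2) (S+1) := by
  have c1 : (S+1)*(d+1) ≤ τ*(S+d+2) :=
    Nat.mul_le_mul h1 (by omega)
  have c2 : 2*((S+1)*(d+1)) ≤ (S+d+1)*(S+d+2) := by
    have hd : S+1 ≤ d := le_trans h1 h2
    calc 2*((S+1)*(d+1)) = (2*(S+1))*(d+1) := by ring
      _ ≤ (S+d+1)*(S+d+2) := Nat.mul_le_mul (by omega) (by omega)
  have key : (S+d+2*j+1) * ((S+1)*(d+1)) ≤ (τ+j) * ((S+d+1)*(S+d+2)) := by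
    calc (S+d+2*j+1) * ((S+1)*(d+1))
        = (S+d+1)*((S+1)*(d+1)) + j*(2*((S+1)*(d+1))) := by ring
      _ ≤ (S+d+1)*(τ*(S+d+2)) + j*((S+d+1)*(S+d+2)) :=
          Nat.add_le_add (Nat.mul_le_mul_left _ c1) (Nat.mul_le_mul_left _ c2)
      _ = (τ+j) * ((S+d+1)*(S+d+2)) := by ring
  have hpos : 0 < (S+1)*(d+1) := by positivity
  have hr := choose_ratio S d
  refine Nat.le_of_mul_le_mul_right ?_ hpos
  calc (S+d+2*j+1) * Nat.choose (S+d) S * ((S+1)*(d+1))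
      = (S+d+2*j+1) * ((S+1)*(d+1)) * Nat.choose (S+d) S := by ring
    _ ≤ (τ+j) * ((S+d+1)*(S+d+2)) * Nat.choose (S+d) S := Nat.mul_le_mul_right _ key
    _ = (τ+j) * ((S+d+1)*(S+d+2) * Nat.choose (S+d) S) := by ring
    _ = (τ+j) * ((S+1)*(d+1) * Nat.choose (S+d+2) (S+1)) := by rw [hr]
    _ = (τ+j) * Nat.choose (S+d+2) (S+1) * ((S+1)*(d+1)) := by ring

lemma chunkD (n t k e : ℕ) (h2t : 2*t ≤ n) (hket : e + k + 1 ≤ t) :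
    n^k * Nat.choose (n-(2*k+1)) e ≤ t^k * Nat.choose (n-1) (e+k) := by
  have hgen : ∀ i, i ≤ k → n^i * Nat.choose (n-(2*k+1)) e ≤ t^i * Nat.choose (n-(2*k+1)+2*i) (e+i) := by
    intro i
    induction i with
    | zero => intro _; simp
    | succ i ih =>
      intro hik
      have ih' := ih (by omega)
      have hstep := step_ineq (e+i) (n-(2*k+1)+i-e) (t-(k-i)) (k-i)
        (by omega) (by omega) (by omega)
      have e1 : (e+i) + (n-(2*k+1)+i-e) = n-(2*k+1)+2*i := by omega
      have e2 : (e+i) + (n-(2*k+1)+i-e) + 2*(k-i) + 1 = n := by omega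
      have e3 : (t-(k-i)) + (k-i) = t := by omega
      have e4 : (e+i) + (n-(2*k+1)+i-e) + 2 = n-(2*k+1)+2*(i+1) := by omega
      rw [e2, e3, e4, e1] at hstep
      calc n^(i+1) * Nat.choose (n-(2*k+1)) e
          = n * (n^i * Nat.choose (n-(2*k+1)) e) := by ring
        _ ≤ n * (t^i * Nat.choose (n-(2*k+1)+2*i) (e+i)) := Nat.mul_le_mul_left _ ih'
        _ = t^i * (n * Nat.choose (n-(2*k+1)+2*i) (e+i)) := by ring
        _ ≤ t^i * (t * Nat.choose (n-(2*k+1)+2*(i+1)) (e+i+1)) := Nat.mul_le_mul_left _ hstep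
        _ = t^(i+1) * Nat.choose (n-(2*k+1)+2*(i+1)) (e+(i+1)) := by ring
  have := hgen k le_rfl
  have h : n-(2*k+1)+2*k = n-1 := by omega
  rwa [h] at this

lemma dist_split (q n j : ℕ) [NeZero q] (x y : Fin n → Fin q) :
    hammingDist x y = (univ.filter fun i : Fin n => (i:ℕ) < j ∧ x i ≠ y i).card
      + (univ.filter fun i : Fin n => j ≤ (i:ℕ) ∧ x i ≠ y i).card := by
  have h := Finset.card_filter_add_card_filter_not
    (s := univ.filter fun i : Fin n => x i ≠ y i) (p := fun i : Fin n => (i:ℕ) < j)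
  rw [filter_filter, filter_filter] at h
  rw [show hammingDist x y = (univ.filter fun i => x i ≠ y i).card from rfl, ← h]
  congr 1
  · congr 1; apply Finset.filter_congr; intro i _; simp [and_comm]
  · congr 1; apply Finset.filter_congr; intro i _; simp [and_comm, not_lt]

theorem stmt10 (q n t k : ℕ) [NeZero q] (hq : 2 ≤ q) (hn : 2 ≤ n) (ht : 1 ≤ t)
    (htn : 2 * t ≤ n) (hkn : 2 * k + 1 ≤ n) :
    (W q n t (2 * k + 1) : ℚ) ≤
      2 * ((q ^ 2 * t : ℚ) / (((q : ℚ) - 1) * n)) ^ k * W q n t 1 := by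
  classical
  have hq01 : (0 : Fin q) ≠ 1 := by
    intro h
    have h2 := congrArg Fin.val h
    rw [Fin.val_zero, Fin.val_one'] at h2
    rw [Nat.mod_eq_of_lt (by omega)] at h2
    omega
  have hu : ∀ i : Fin n, stdVec q n 0 i = 0 := fun i => by simp [stdVec]
  -- the key structural fact about elements of the intersection
  have hmemI : ∀ y ∈ ball (stdVec q n 0) t ∩ ball (stdVec q n (2*k+1)) t,
      2*(univ.filter fun i : Fin n => 2*k+1 ≤ (i:ℕ) ∧ y i ≠ 0).card + 2*(k+1) ≤ 2*t + 1 := by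
    intro y hy
    rw [Finset.mem_inter, ball, ball, mem_filter, mem_filter] at hy
    obtain ⟨⟨-, h1⟩, ⟨-, h2⟩⟩ := hy
    rw [dist_split q n (2*k+1)] at h1 h2
    have eu1 : univ.filter (fun i : Fin n => (i:ℕ) < 2*k+1 ∧ stdVec q n 0 i ≠ y i)
        = univ.filter (fun i : Fin n => (i:ℕ) < 2*k+1 ∧ y i ≠ 0) := by
      apply Finset.filter_congr; intro i _
      rw [hu i]; exact and_congr_right' ne_comm
    have eu2 : univ.filter (fun i : Fin n => 2*k+1 ≤ (i:ℕ) ∧ stdVec q n 0 i ≠ y i)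
        = univ.filter (fun i : Fin n => 2*k+1 ≤ (i:ℕ) ∧ y i ≠ 0) := by
      apply Finset.filter_congr; intro i _
      rw [hu i]; exact and_congr_right' ne_comm
    have ev1 : univ.filter (fun i : Fin n => (i:ℕ) < 2*k+1 ∧ stdVec q n (2*k+1) i ≠ y i)
        = univ.filter (fun i : Fin n => (i:ℕ) < 2*k+1 ∧ y i ≠ 1) := by
      apply Finset.filter_congr; intro i _
      refine and_congr_right (fun h => ?_)
      rw [show stdVec q n (2*k+1) i = 1 from if_pos h]; exact ne_comm
    have ev2 : univ.filter (fun i : Fin n => 2*k+1 ≤ (i:ℕ) ∧ stdVec q n (2*k+1) i ≠ y i)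
        = univ.filter (fun i : Fin n => 2*k+1 ≤ (i:ℕ) ∧ y i ≠ 0) := by
      apply Finset.filter_congr; intro i _
      refine and_congr_right (fun h => ?_)
      rw [show stdVec q n (2*k+1) i = 0 from if_neg (by omega)]; exact ne_comm
    rw [eu1, eu2] at h1
    rw [ev1, ev2] at h2
    -- coverage: the first 2k+1 coordinates are covered by (y i ≠ 0) and (y i ≠ 1)
    have hcov : 2*k+1 ≤ (univ.filter (fun i : Fin n => (i:ℕ) < 2*k+1 ∧ y i ≠ 0)).card
        + (univ.filter (fun i : Fin n => (i:ℕ) < 2*k+1 ∧ y i ≠ 1)).card := by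
      have hsub : (univ.filter (fun i : Fin n => (i:ℕ) < 2*k+1))
          ⊆ (univ.filter (fun i : Fin n => (i:ℕ) < 2*k+1 ∧ y i ≠ 0))
            ∪ (univ.filter (fun i : Fin n => (i:ℕ) < 2*k+1 ∧ y i ≠ 1)) := by
        intro i hi
        rw [mem_filter] at hi
        rw [Finset.mem_union, mem_filter, mem_filter]
        by_cases h0 : y i = 0
        · exact Or.inr ⟨mem_univ _, hi.2, by rw [h0]; exact hq01⟩
        · exact Or.inl ⟨mem_univ _, hi.2, h0⟩
      calc 2*k+1 = (univ.filter (fun i : Fin n => (i:ℕ) < 2*k+1)).card :=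
            (card_filter_lt' n (2*k+1) hkn).symm
        _ ≤ _ := le_trans (Finset.card_le_card hsub) (Finset.card_union_le _ _)
    omega
  by_cases hkt : k + 1 ≤ t
  · -- main case
    -- upper bound on W (2k+1)
    have hsubC : ball (stdVec q n 0) t ∩ ball (stdVec q n (2*k+1)) t
        ⊆ univ.filter (fun y : Fin n → Fin q =>
          (univ.filter (fun i : Fin n => 2*k+1 ≤ (i:ℕ) ∧ y i ≠ 0)).card ≤ t-(k+1)) := by
      intro y hy
      rw [mem_filter]
      exact ⟨mem_univ _, by have := hmemI y hy; omega⟩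
    have hW2k : W q n t (2*k+1) ≤ q^(2*k+1) *
        ∑ e ∈ Finset.range (t-k), (n-(2*k+1)).choose e * (q-1)^e := by
      have h1 : W q n t (2*k+1) ≤ (univ.filter (fun y : Fin n → Fin q =>
          (univ.filter (fun i : Fin n => 2*k+1 ≤ (i:ℕ) ∧ y i ≠ 0)).card ≤ t-(k+1))).card :=
        Finset.card_le_card hsubC
      rw [count_lemma q n (2*k+1) (t-(k+1)) hkn] at h1
      have : t-(k+1)+1 = t-k := by omega
      rwa [this] at h1
    -- lower bound on W 1
    have hsubB : univ.filter (fun y : Fin n → Fin q =>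
          (univ.filter (fun i : Fin n => 1 ≤ (i:ℕ) ∧ y i ≠ 0)).card ≤ t-1)
        ⊆ ball (stdVec q n 0) t ∩ ball (stdVec q n 1) t := by
      intro y hy
      rw [mem_filter] at hy
      have hE := hy.2
      have hA : ∀ z : Fin n → Fin q,
          (univ.filter (fun i : Fin n => (i:ℕ) < 1 ∧ z i ≠ y i)).card ≤ 1 := by
        intro z
        have hsub : univ.filter (fun i : Fin n => (i:ℕ) < 1 ∧ z i ≠ y i)
            ⊆ univ.filter (fun i : Fin n => (i:ℕ) < 1) := by
          intro i hi
          rw [mem_filter] at hi ⊢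
          exact ⟨hi.1, hi.2.1⟩
        calc (univ.filter (fun i : Fin n => (i:ℕ) < 1 ∧ z i ≠ y i)).card
            ≤ (univ.filter (fun i : Fin n => (i:ℕ) < 1)).card :=
              Finset.card_le_card hsub
          _ = 1 := card_filter_lt' n 1 (by omega)
      rw [Finset.mem_inter, ball, ball, mem_filter, mem_filter]
      refine ⟨⟨mem_univ _, ?_⟩, ⟨mem_univ _, ?_⟩⟩
      · rw [dist_split q n 1]
        have e2 : univ.filter (fun i : Fin n => 1 ≤ (i:ℕ) ∧ stdVec q n 0 i ≠ y i)
            = univ.filter (fun i : Fin n => 1 ≤ (i:ℕ) ∧ y i ≠ 0) := by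
          apply Finset.filter_congr; intro i _
          rw [hu i]; exact and_congr_right' ne_comm
        rw [e2]
        have := hA (stdVec q n 0)
        omega
      · rw [dist_split q n 1]
        have e2 : univ.filter (fun i : Fin n => 1 ≤ (i:ℕ) ∧ stdVec q n 1 i ≠ y i)
            = univ.filter (fun i : Fin n => 1 ≤ (i:ℕ) ∧ y i ≠ 0) := by
          apply Finset.filter_congr; intro i _
          refine and_congr_right (fun h => ?_)
          rw [show stdVec q n 1 i = 0 from if_neg (by omega)]; exact ne_comm
        rw [e2]
        have := hA (stdVec q n 1)
        omega
    have hW1 : q * ∑ e ∈ Finset.range t, (n-1).choose e * (q-1)^e ≤ W q n t 1 := by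
      have h2 : t-1+1 = t := by omega
      have hcount := count_lemma q n 1 (t-1) (le_trans one_le_two hn)
      rw [h2, pow_one] at hcount
      have h1 := Finset.card_le_card hsubB
      calc q * ∑ e ∈ Finset.range t, (n-1).choose e * (q-1)^e
          = (univ.filter (fun y : Fin n → Fin q =>
              (univ.filter (fun i : Fin n => 1 ≤ (i:ℕ) ∧ y i ≠ 0)).card ≤ t-1)).card := hcount.symm
        _ ≤ (ball (stdVec q n 0) t ∩ ball (stdVec q n 1) t).card := h1
        _ = W q n t 1 := rfl
    -- the binomial-sum comparison
    have hFG : ((q-1)*n)^k * (∑ e ∈ Finset.range (t-k), (n-(2*k+1)).choose e * (q-1)^e)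
        ≤ t^k * ∑ e ∈ Finset.range t, (n-1).choose e * (q-1)^e := by
      calc ((q-1)*n)^k * (∑ e ∈ Finset.range (t-k), (n-(2*k+1)).choose e * (q-1)^e)
          = ∑ e ∈ Finset.range (t-k), (q-1)^k * (n^k * (n-(2*k+1)).choose e) * (q-1)^e := by
            rw [Finset.mul_sum]; apply Finset.sum_congr rfl; intro e _; ring
        _ ≤ ∑ e ∈ Finset.range (t-k), (q-1)^k * (t^k * (n-1).choose (e+k)) * (q-1)^e := by
            apply Finset.sum_le_sum
            intro e he
            have hD := chunkD n t k e htn (by rw [Finset.mem_range] at he; omega)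
            exact Nat.mul_le_mul_right _ (Nat.mul_le_mul_left _ hD)
        _ = ∑ e ∈ Finset.range (t-k), t^k * ((n-1).choose (e+k) * (q-1)^(e+k)) := by
            apply Finset.sum_congr rfl; intro e _
            rw [pow_add]; ring
        _ = t^k * ∑ e ∈ Finset.range (t-k), (n-1).choose (e+k) * (q-1)^(e+k) := by
            rw [Finset.mul_sum]
        _ ≤ t^k * ∑ e ∈ Finset.range t, (n-1).choose e * (q-1)^e := by
            apply Nat.mul_le_mul_left
            have := Finset.sum_Ico_eq_sum_range
              (f := fun e => (n-1).choose e * (q-1)^e) (m := k) (n := t)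
            rw [show t - k = t - k from rfl] at this
            calc ∑ e ∈ Finset.range (t-k), (n-1).choose (e+k) * (q-1)^(e+k)
                = ∑ e ∈ Finset.range (t-k), (n-1).choose (k+e) * (q-1)^(k+e) := by
                  apply Finset.sum_congr rfl; intro e _; rw [Nat.add_comm e k]
              _ = ∑ e ∈ Finset.Ico k t, (n-1).choose e * (q-1)^e := this.symm
              _ ≤ ∑ e ∈ Finset.range t, (n-1).choose e * (q-1)^e := by
                  apply Finset.sum_le_sum_of_subset
                  intro x hx
                  rw [Finset.mem_Ico] at hx
                  rw [Finset.mem_range]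
                  omega
    -- now assemble over ℚ
    set F : ℕ := ∑ e ∈ Finset.range (t-k), (n-(2*k+1)).choose e * (q-1)^e with hF
    set G : ℕ := ∑ e ∈ Finset.range t, (n-1).choose e * (q-1)^e with hG
    have hqQ : (2:ℚ) ≤ (q:ℚ) := by exact_mod_cast hq
    have hq1Q : (0:ℚ) < (q:ℚ) - 1 := by linarith
    have hnQ : (0:ℚ) < (n:ℚ) := by
      have : (0:ℕ) < n := by omega
      exact_mod_cast this
    have hcpos : (0:ℚ) < ((q:ℚ)-1) * (n:ℚ) := mul_pos hq1Q hnQ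
    have hFQ : (F:ℚ) ≤ (t:ℚ)^k * (G:ℚ) / (((q:ℚ)-1)*(n:ℚ))^k := by
      rw [le_div_iff₀ (by positivity)]
      have hcast : ((((q-1)*n)^k * F : ℕ) : ℚ) ≤ ((t^k * G : ℕ) : ℚ) := by exact_mod_cast hFG
      have hq1 : 1 ≤ q := by omega
      push_cast [Nat.cast_sub hq1] at hcast
      calc (F:ℚ) * (((q:ℚ)-1)*(n:ℚ))^k = (((q:ℚ)-1)*(n:ℚ))^k * (F:ℚ) := by ring
        _ ≤ (t:ℚ)^k * (G:ℚ) := hcast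
    have hW2kQ : (W q n t (2*k+1) : ℚ) ≤ (q:ℚ)^(2*k+1) * (F:ℚ) := by exact_mod_cast hW2k
    have hW1Q : (q:ℚ) * (G:ℚ) ≤ (W q n t 1 : ℚ) := by exact_mod_cast hW1
    have hX : (0:ℚ) ≤ ((q:ℚ)^2 * (t:ℚ) / (((q:ℚ)-1)*(n:ℚ))) :=
      div_nonneg (by positivity) (le_of_lt hcpos)
    have hXk : (0:ℚ) ≤ ((q:ℚ)^2 * (t:ℚ) / (((q:ℚ)-1)*(n:ℚ)))^k := pow_nonneg hX k
    have hgoal : (W q n t (2*k+1) : ℚ) ≤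
        2 * ((q:ℚ)^2 * (t:ℚ) / (((q:ℚ)-1)*(n:ℚ)))^k * (W q n t 1 : ℚ) := by
      have hW1nonneg : (0:ℚ) ≤ (W q n t 1 : ℚ) := by positivity
      calc (W q n t (2*k+1) : ℚ) ≤ (q:ℚ)^(2*k+1) * (F:ℚ) := hW2kQ
        _ ≤ (q:ℚ)^(2*k+1) * ((t:ℚ)^k * (G:ℚ) / (((q:ℚ)-1)*(n:ℚ))^k) :=
            mul_le_mul_of_nonneg_left hFQ (by positivity)
        _ = ((q:ℚ)^2 * (t:ℚ) / (((q:ℚ)-1)*(n:ℚ)))^k * ((q:ℚ) * (G:ℚ)) := by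
            rw [div_pow]
            field_simp
            ring
        _ ≤ ((q:ℚ)^2 * (t:ℚ) / (((q:ℚ)-1)*(n:ℚ)))^k * (W q n t 1 : ℚ) :=
            mul_le_mul_of_nonneg_left hW1Q hXk
        _ ≤ 2 * ((q:ℚ)^2 * (t:ℚ) / (((q:ℚ)-1)*(n:ℚ)))^k * (W q n t 1 : ℚ) := by
            have := mul_nonneg hXk hW1nonneg
            linarith
    exact_mod_cast hgoal
  · -- degenerate case : the intersection is empty
    have hempty : ball (stdVec q n 0) t ∩ ball (stdVec q n (2*k+1)) t = ∅ := by
      rw [Finset.eq_empty_iff_forall_notMem]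
      intro y hy
      have := hmemI y hy
      omega
    have hW0 : W q n t (2*k+1) = 0 := by
      rw [W, hempty]; rfl
    rw [hW0]
    push_cast
    have h1 : (0:ℚ) ≤ (q:ℚ)^2 * t / (((q:ℚ)-1) * n) := by
      apply div_nonneg
      · positivity
      · apply mul_nonneg
        · have : (2:ℚ) ≤ (q:ℚ) := by exact_mod_cast hq
          linarith
        · positivity
    have h2 : (0:ℚ) ≤ (W q n t 1 : ℚ) := by positivity
    positivity
end

section
/- For t ≥ 1 and n ≥ 1, W_q(n, t, 1) ≤ (qt/((q−1)n))·V_q(n, t), where W_q(n, t, 1) is the size of the intersection of two radius-t Hamming balls in [q]^n at center distance 1. -/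
open Finset

section Counting

variable {q n : ℕ} [NeZero q]

/-- support of a vector -/
def supp (y : Fin n → Fin q) : Finset (Fin n) := univ.filter (fun i => y i ≠ 0)

lemma fiber_eq (s : Finset (Fin n)) :
    (univ.filter fun y : Fin n → Fin q => supp y = s)
      = Fintype.piFinset (fun i => if i ∈ s then ({0}ᶜ : Finset (Fin q)) else {0}) := by
  ext y
  simp only [mem_filter, mem_univ, true_and, Fintype.mem_piFinset]; simp only [supp]
  constructor
  · intro h i
    by_cases hi : i ∈ s
    · have : y i ≠ 0 := by
        rw [← h] at hi; simpa using (mem_filter.mp hi).2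
      simp [hi, this]
    · have : ¬ (y i ≠ 0) := fun hy => hi (by rw [← h]; simp [hy])
      simp [hi, not_not.mp this]
  · intro h
    ext i
    have := h i
    by_cases hi : i ∈ s <;> simp [hi] at this <;> simp [hi, this]

lemma fiber_card (s : Finset (Fin n)) :
    (univ.filter fun y : Fin n → Fin q => supp y = s).card = (q - 1) ^ s.card := by
  rw [fiber_eq, Fintype.card_piFinset]
  have : ∀ i : Fin n, ((if i ∈ s then ({0}ᶜ : Finset (Fin q)) else {0})).card
      = if i ∈ s then (q - 1) else 1 := by
    intro i
    by_cases hi : i ∈ s <;> simp [hi, Finset.card_compl]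
  rw [Finset.prod_congr rfl (fun i _ => this i)]
  rw [Finset.prod_ite_mem, univ_inter, Finset.prod_const]

lemma count_weight (j : ℕ) :
    (univ.filter fun y : Fin n → Fin q => (supp y).card = j).card
      = n.choose j * (q - 1) ^ j := by
  rw [Finset.card_eq_sum_card_fiberwise (f := supp) (t := powersetCard j univ)
    (fun y hy => by simp [mem_powersetCard, (mem_filter.mp hy).2])]
  have hfib : ∀ s ∈ powersetCard j univ,
      ((univ.filter fun y : Fin n → Fin q => (supp y).card = j).filter
        (fun y => supp y = s)).card = (q - 1) ^ j := by
    intro s hs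
    obtain ⟨-, hcard⟩ := mem_powersetCard.mp hs
    rw [Finset.filter_filter]
    have : (univ.filter fun y : Fin n → Fin q => (supp y).card = j ∧ supp y = s)
        = univ.filter fun y : Fin n → Fin q => supp y = s := by
      apply Finset.filter_congr
      intro y _
      constructor
      · exact fun h => h.2
      · exact fun h => ⟨by rw [h, hcard], h⟩
    rw [this, fiber_card, hcard]
  rw [Finset.sum_congr rfl hfib, Finset.sum_const, Finset.card_powersetCard,
    Finset.card_univ, Fintype.card_fin, smul_eq_mul]

lemma ballZero_eq (t : ℕ) :
    ball (stdVec q n 0) t = univ.filter fun y : Fin n → Fin q => (supp y).card ≤ t := by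
  ext y
  have h0 : ∀ i, stdVec q n 0 i = 0 := by intro i; simp [stdVec]
  simp only [ball, mem_filter, mem_univ, true_and]
  have : hammingDist (stdVec q n 0) y = (supp y).card := by
    show (univ.filter fun i => stdVec q n 0 i ≠ y i).card = _
    congr 1
    apply Finset.filter_congr
    intro i _
    simp [h0 i, eq_comm, supp]
  rw [this]

lemma ballZero_card (t : ℕ) : (ball (stdVec q n 0) t).card = V q n t := by
  rw [ballZero_eq]
  rw [Finset.card_eq_sum_card_fiberwise (f := fun y => (supp y).card) (t := range (t + 1))
    (fun y hy => by simp [Nat.lt_succ_iff, (mem_filter.mp hy).2])]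
  rw [V]
  apply Finset.sum_congr rfl
  intro j hj
  have hjt : j ≤ t := Nat.lt_succ_iff.mp (mem_range.mp hj)
  rw [Finset.filter_filter]
  have : (univ.filter fun y : Fin n → Fin q => (supp y).card ≤ t ∧ (supp y).card = j)
      = univ.filter fun y : Fin n → Fin q => (supp y).card = j := by
    apply Finset.filter_congr
    intro y _
    constructor
    · exact fun h => h.2
    · exact fun h => ⟨h ▸ hjt, h⟩
  rw [this, count_weight]

end Counting

section Inter

variable {q n : ℕ} [NeZero q]

lemma dist_e1 (hq : 2 ≤ q) (hn : 1 ≤ n) (y : Fin n → Fin q) :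
    hammingDist (stdVec q n 1) y + (if y ⟨0, hn⟩ = 1 then 1 else 0)
      = (supp y).card + (if y ⟨0, hn⟩ = 0 then 1 else 0) := by
  have h01 : (0 : Fin q) ≠ 1 := by
    obtain ⟨q', rfl⟩ : ∃ q', q = q' + 2 := ⟨q - 2, by omega⟩
    exact zero_ne_one
  set z : Fin n := ⟨0, hn⟩ with hz
  have hd : hammingDist (stdVec q n 1) y
      = ∑ i : Fin n, if stdVec q n 1 i ≠ y i then 1 else 0 := by
    show (univ.filter fun i => stdVec q n 1 i ≠ y i).card = _
    rw [Finset.card_filter]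
  have hs : (supp y).card = ∑ i : Fin n, if y i ≠ 0 then 1 else 0 := by
    rw [supp, Finset.card_filter]
  have hsplit1 : (∑ i : Fin n, if stdVec q n 1 i ≠ y i then 1 else 0)
      = (∑ i ∈ univ.erase z, if stdVec q n 1 i ≠ y i then 1 else 0)
        + (if stdVec q n 1 z ≠ y z then 1 else 0) :=
    (Finset.sum_erase_add _ _ (Finset.mem_univ z)).symm
  have hsplit2 : (∑ i : Fin n, if y i ≠ 0 then 1 else 0)
      = (∑ i ∈ univ.erase z, if y i ≠ 0 then 1 else 0)
        + (if y z ≠ 0 then 1 else 0) :=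
    (Finset.sum_erase_add _ _ (Finset.mem_univ z)).symm
  have hcong : (∑ i ∈ univ.erase z, if stdVec q n 1 i ≠ y i then 1 else 0)
      = (∑ i ∈ univ.erase z, if y i ≠ 0 then 1 else 0) := by
    apply Finset.sum_congr rfl
    intro i hi
    have hiz : i ≠ z := (Finset.mem_erase.mp hi).1
    have hlt : ¬ ((i : ℕ) < 1) := by
      intro h
      apply hiz
      apply Fin.ext
      show (i : ℕ) = 0
      omega
    simp only [stdVec, hlt, if_false]
    by_cases hy : y i = 0
    · simp [hy]
    · simp [hy, Ne.symm hy]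
  have hz1 : stdVec q n 1 z = 1 := by simp [stdVec, hz]
  have hkey : (if stdVec q n 1 z ≠ y z then 1 else 0) + (if y z = 1 then 1 else 0)
      = (if y z ≠ 0 then 1 else 0) + (if y z = 0 then 1 else 0) := by
    rw [hz1]
    by_cases h1 : y z = 1
    · simp [h1, h01.symm]
    · by_cases h0 : y z = 0
      · simp [h0, h01, h01.symm]
      · simp [h0, h1, Ne.symm h1]
  omega

lemma inter_eq (hq : 2 ≤ q) (hn : 1 ≤ n) (t : ℕ) :
    ball (stdVec q n 0) t ∩ ball (stdVec q n 1) t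
      = ball (stdVec q n 0) t \
          (univ.filter fun y : Fin n → Fin q => (supp y).card = t ∧ y ⟨0, hn⟩ = 0) := by
  have h01 : (0 : Fin q) ≠ 1 := by
    obtain ⟨q', rfl⟩ : ∃ q', q = q' + 2 := ⟨q - 2, by omega⟩
    exact zero_ne_one
  ext y
  have hb0 : y ∈ ball (stdVec q n 0) t ↔ (supp y).card ≤ t := by
    rw [ballZero_eq]; simp
  have hb1 : y ∈ ball (stdVec q n 1) t ↔ hammingDist (stdVec q n 1) y ≤ t := by
    simp [ball]
  have hde := dist_e1 hq hn y
  simp only [Finset.mem_inter, Finset.mem_sdiff, hb0, hb1, Finset.mem_filter,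
    Finset.mem_univ, true_and, not_and]
  constructor
  · rintro ⟨hw, hd⟩
    refine ⟨hw, fun hwt h0 => ?_⟩
    rw [if_pos h0, if_neg (fun h1 => h01 (h0.symm.trans h1))] at hde
    omega
  · rintro ⟨hw, hni⟩
    refine ⟨hw, ?_⟩
    by_cases h0 : y ⟨0, hn⟩ = 0
    · have hne : (supp y).card ≠ t := fun h => hni h h0
      rw [if_pos h0, if_neg (fun h1 => h01 (h0.symm.trans h1))] at hde
      omega
    · rw [if_neg h0] at hde
      omega

lemma S_card (hq : 2 ≤ q) (hn : 1 ≤ n) (t : ℕ) :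
    (univ.filter fun y : Fin n → Fin q => (supp y).card = t ∧ y ⟨0, hn⟩ = 0).card
      = (n - 1).choose t * (q - 1) ^ t := by
  set z : Fin n := ⟨0, hn⟩ with hz
  rw [Finset.card_eq_sum_card_fiberwise (f := supp) (t := powersetCard t (univ.erase z))
    (fun y hy => by
      obtain ⟨hw, h0⟩ := (mem_filter.mp hy).2
      rw [Finset.mem_coe, mem_powersetCard]
      refine ⟨fun i hi => ?_, hw⟩
      rw [Finset.mem_erase]
      refine ⟨fun hiz => ?_, Finset.mem_univ i⟩
      have : y i ≠ 0 := by simpa [supp] using hi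
      exact this (hiz ▸ h0))]
  have hfib : ∀ s ∈ powersetCard t (univ.erase z),
      ((univ.filter fun y : Fin n → Fin q => (supp y).card = t ∧ y z = 0).filter
        (fun y => supp y = s)).card = (q - 1) ^ t := by
    intro s hs
    obtain ⟨hsub, hcard⟩ := mem_powersetCard.mp hs
    rw [Finset.filter_filter]
    have : (univ.filter fun y : Fin n → Fin q => ((supp y).card = t ∧ y z = 0) ∧ supp y = s)
        = univ.filter fun y : Fin n → Fin q => supp y = s := by
      apply Finset.filter_congr
      intro y _
      constructor
      · exact fun h => h.2
      · intro h
        refine ⟨⟨by rw [h, hcard], ?_⟩, h⟩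
        by_contra h0
        have hzs : z ∈ s := by rw [← h]; simp [supp, h0]
        exact (Finset.mem_erase.mp (hsub hzs)).1 rfl
    rw [this, fiber_card, hcard]
  rw [Finset.sum_congr rfl hfib, Finset.sum_const, Finset.card_powersetCard, smul_eq_mul]
  congr 2
  rw [Finset.card_erase_of_mem (Finset.mem_univ z), Finset.card_univ, Fintype.card_fin]

end Inter

section Arith

lemma arith_main (q n t : ℕ) (hq : 1 ≤ q) (ht : 1 ≤ t) (htn : t ≤ n) :
    (q - 1) * n * (∑ j ∈ Finset.range (t + 1), n.choose j * (q - 1) ^ j)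
      ≤ q * t * (∑ j ∈ Finset.range (t + 1), n.choose j * (q - 1) ^ j)
        + (q - 1) * (n - t) * (n.choose t * (q - 1) ^ t) := by
  set p := q - 1 with hp
  have hqp : q = p + 1 := by omega
  set a : ℕ → ℕ := fun j => n.choose j * p ^ j with ha
  set A := ∑ j ∈ Finset.range t, a j with hA
  have hsum : ∑ j ∈ Finset.range (t + 1), a j = A + a t := Finset.sum_range_succ a t
  have hkey : ∀ j, (j + 1) * a (j + 1) = p * (n - j) * a j := by
    intro j
    have h := Nat.choose_succ_right_eq n j
    calc (j + 1) * a (j + 1) = (n.choose (j + 1) * (j + 1)) * p ^ j * p := by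
          simp only [ha]; ring
    _ = (n.choose j * (n - j)) * p ^ j * p := by rw [h]
    _ = p * (n - j) * a j := by simp only [ha]; ring
  have hC : p * n * A ≤ q * t * A + t * a t := by
    have h1 : p * n * A = ∑ j ∈ Finset.range t, ((j + 1) * a (j + 1) + p * j * a j) := by
      rw [hA, Finset.mul_sum]
      apply Finset.sum_congr rfl
      intro j hj
      have hjt : j < t := Finset.mem_range.mp hj
      have hjn : j ≤ n := le_trans (le_of_lt hjt) htn
      rw [hkey j]
      have hnj : n - j + j = n := by omega
      calc p * n * a j = p * ((n - j) + j) * a j := by rw [hnj]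
      _ = p * (n - j) * a j + p * j * a j := by ring
    rw [h1]
    have h2 : ∑ j ∈ Finset.range t, ((j + 1) * a (j + 1) + p * j * a j)
        ≤ ∑ j ∈ Finset.range t, (t * a (j + 1) + p * t * a j) := by
      apply Finset.sum_le_sum
      intro j hj
      have hjt : j < t := Finset.mem_range.mp hj
      have hb1 : (j + 1) * a (j + 1) ≤ t * a (j + 1) :=
        Nat.mul_le_mul_right _ (by omega)
      have hb2 : p * j * a j ≤ p * t * a j :=
        Nat.mul_le_mul_right _ (Nat.mul_le_mul_left p (le_of_lt hjt))
      omega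
    have h3 : ∑ j ∈ Finset.range t, (t * a (j + 1) + p * t * a j)
        = t * (∑ j ∈ Finset.range t, a (j + 1)) + p * t * A := by
      rw [Finset.sum_add_distrib, ← Finset.mul_sum, ← Finset.mul_sum]
    have h4 : ∑ j ∈ Finset.range t, a (j + 1) ≤ A + a t := by
      have h5 := Finset.sum_range_succ' a t
      have h6 := Finset.sum_range_succ a t
      omega
    calc ∑ j ∈ Finset.range t, ((j + 1) * a (j + 1) + p * j * a j)
        ≤ t * (∑ j ∈ Finset.range t, a (j + 1)) + p * t * A := h2.trans (le_of_eq h3)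
      _ ≤ t * (A + a t) + p * t * A :=
          Nat.add_le_add_right (Nat.mul_le_mul_left t h4) _
      _ = q * t * A + t * a t := by rw [hqp]; ring
  rw [hsum]
  have hnt : n - t + t = n := by omega
  calc p * n * (A + a t) = p * n * A + p * ((n - t) + t) * a t := by rw [hnt]; ring
    _ = p * n * A + p * (n - t) * a t + p * t * a t := by ring
    _ ≤ (q * t * A + t * a t) + p * (n - t) * a t + p * t * a t := by omega
    _ = q * t * A + q * t * a t + p * (n - t) * a t := by rw [hqp]; ring
    _ = q * t * (A + a t) + p * (n - t) * a t := by ring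

end Arith

theorem stmt11 (q n t : ℕ) [NeZero q] (hq : 2 ≤ q) (hn : 1 ≤ n) (ht : 1 ≤ t) (htn : t ≤ n) :
    (W q n t 1 : ℚ) ≤ ((q : ℚ) * t / (((q : ℚ) - 1) * n)) * V q n t := by
  have hq1 : 1 ≤ q := by omega
  set S := (univ.filter fun y : Fin n → Fin q => (supp y).card = t ∧ y ⟨0, hn⟩ = 0) with hS
  have hSsub : S ⊆ ball (stdVec q n 0) t := by
    intro y hy
    rw [ballZero_eq]
    simp only [mem_filter, mem_univ, true_and]
    exact le_of_eq ((mem_filter.mp hy).2.1)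
  have hWcard : W q n t 1 + (n - 1).choose t * (q - 1) ^ t = V q n t := by
    rw [W, inter_eq hq hn t, ← hS, ← S_card hq hn t, ← ballZero_card t]
    exact Finset.card_sdiff_add_card_eq_card hSsub
  have hch : n * (n - 1).choose t = (n - t) * n.choose t := by
    have h := Nat.choose_mul_succ_eq (n - 1) t
    have hn1 : n - 1 + 1 = n := by omega
    rw [hn1] at h
    calc n * (n - 1).choose t = (n - 1).choose t * n := Nat.mul_comm _ _
      _ = n.choose t * (n - t) := h
      _ = (n - t) * n.choose t := Nat.mul_comm _ _
  have hnat : (q - 1) * n * W q n t 1 ≤ q * t * V q n t := by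
    have harith := arith_main q n t hq1 ht htn
    have hVeq : (q - 1) * n * V q n t
        = (q - 1) * n * W q n t 1 + (q - 1) * n * ((n - 1).choose t * (q - 1) ^ t) := by
      rw [← Nat.mul_add, hWcard]
    have hSeq : (q - 1) * n * ((n - 1).choose t * (q - 1) ^ t)
        = (q - 1) * (n - t) * (n.choose t * (q - 1) ^ t) := by
      calc (q - 1) * n * ((n - 1).choose t * (q - 1) ^ t)
          = (q - 1) * (n * (n - 1).choose t) * (q - 1) ^ t := by ring
        _ = (q - 1) * ((n - t) * n.choose t) * (q - 1) ^ t := by rw [hch]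
        _ = (q - 1) * (n - t) * (n.choose t * (q - 1) ^ t) := by ring
    have hmain : (q - 1) * n * W q n t 1 + (q - 1) * n * ((n - 1).choose t * (q - 1) ^ t)
        ≤ q * t * V q n t + (q - 1) * n * ((n - 1).choose t * (q - 1) ^ t) := by
      rw [← hVeq]
      calc (q - 1) * n * V q n t
          ≤ q * t * V q n t + (q - 1) * (n - t) * (n.choose t * (q - 1) ^ t) := by
            rw [V]; exact harith
        _ = q * t * V q n t + (q - 1) * n * ((n - 1).choose t * (q - 1) ^ t) := by
            rw [hSeq]
    exact Nat.le_of_add_le_add_right hmain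
  have hpos : (0 : ℚ) < ((q : ℚ) - 1) * n := by
    have hq2 : (2 : ℚ) ≤ (q : ℚ) := by exact_mod_cast hq
    have hn1 : (1 : ℚ) ≤ (n : ℚ) := by exact_mod_cast hn
    nlinarith
  rw [div_mul_eq_mul_div, le_div_iff₀ hpos]
  have hc : (((q - 1) * n * W q n t 1 : ℕ) : ℚ) ≤ ((q * t * V q n t : ℕ) : ℚ) := by
    exact_mod_cast hnat
  push_cast [Nat.cast_sub hq1] at hc
  linarith
end

section
/- (Bounded independent-set count from a ball cover) Suppose X ⊆ [q]^n satisfies ⋃_{x ∈ X} B(x, t) = [q]^n, and S ⊆ [q]^n satisfies |B(x, t) ∩ S| ≤ M for every x ∈ X. Then the number of subsets I ⊆ S whose elements are pairwise at Hamming distance greater than 2t is at most (M + 1)^{|X|}. -/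
theorem stmt19 (q n t M : ℕ) (hq : 2 ≤ q) (hn : 1 ≤ n)
    (X S : Finset (Fin n → Fin q))
    (hcover : X.biUnion (fun x => ball x t) = Finset.univ)
    (hM : ∀ x ∈ X, (ball x t ∩ S).card ≤ M) :
    (S.powerset.filter
        (fun I => ∀ a ∈ I, ∀ b ∈ I, a ≠ b → 2 * t < hammingDist a b)).card ≤
      (M + 1) ^ X.card := by
  classical
  set P := S.powerset.filter
      (fun I => ∀ a ∈ I, ∀ b ∈ I, a ≠ b → 2 * t < hammingDist a b) with hP
  set T := X.pi (fun x => insert (none : Option (Fin n → Fin q))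
      ((ball x t ∩ S).image some)) with hT
  -- key: each ball contains at most one element of an independent set
  have key : ∀ I ∈ P, ∀ x, ∀ a ∈ ball x t ∩ I, ∀ b ∈ ball x t ∩ I, a = b := by
    intro I hI x a ha b hb
    simp only [hP, Finset.mem_filter, Finset.mem_powerset] at hI
    simp only [Finset.mem_inter, ball, Finset.mem_filter] at ha hb
    by_contra hab
    have h1 := hI.2 a ha.2 b hb.2 hab
    have h2 : hammingDist a b ≤ 2 * t := by
      calc hammingDist a b ≤ hammingDist a x + hammingDist x b := hammingDist_triangle a x b
        _ ≤ t + t := by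
            have := ha.1.2; have := hb.1.2
            rw [hammingDist_comm a x]; omega
        _ = 2 * t := by ring
    omega
  have hinj : ∀ I ∈ P, (fun x _ =>
      if h : (ball x t ∩ I).Nonempty then some h.choose else none) ∈ T ∧ True := by
    intro I hI
    refine ⟨?_, trivial⟩
    simp only [hT, Finset.mem_pi]
    intro x hx
    by_cases h : (ball x t ∩ I).Nonempty
    · simp only [dif_pos h, Finset.mem_insert, Finset.mem_image]
      right
      refine ⟨h.choose, ?_, rfl⟩
      have hc := h.choose_spec
      simp only [Finset.mem_inter] at hc ⊢
      have hIS : I ⊆ S := by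
        simp only [hP, Finset.mem_filter, Finset.mem_powerset] at hI; exact hI.1
      exact ⟨hc.1, hIS hc.2⟩
    · simp [dif_neg h]
  have card_le : P.card ≤ T.card := by
    apply Finset.card_le_card_of_injOn
      (fun I => fun x _ => if h : (ball x t ∩ I).Nonempty then some h.choose else none)
    · intro I hI; exact (hinj I hI).1
    · intro I hI J hJ hIJ
      have main : ∀ I ∈ P, ∀ J ∈ P,
          ((fun x (_ : x ∈ X) => if h : (ball x t ∩ I).Nonempty then some h.choose else none) =
           (fun x (_ : x ∈ X) => if h : (ball x t ∩ J).Nonempty then some h.choose else none)) →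
          I ⊆ J := by
        intro I hI J hJ heq a haI
        -- a is covered by some ball
        have : a ∈ X.biUnion (fun x => ball x t) := by rw [hcover]; exact Finset.mem_univ a
        simp only [Finset.mem_biUnion] at this
        obtain ⟨x, hxX, hax⟩ := this
        have hne : (ball x t ∩ I).Nonempty := ⟨a, Finset.mem_inter.2 ⟨hax, haI⟩⟩
        have hchoose : hne.choose = a :=
          key I hI x hne.choose hne.choose_spec a (Finset.mem_inter.2 ⟨hax, haI⟩)
        have := congrFun (congrFun heq x) hxX
        rw [dif_pos hne] at this
        by_cases h2 : (ball x t ∩ J).Nonempty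
        · rw [dif_pos h2] at this
          have : hne.choose = h2.choose := Option.some.inj this
          have := h2.choose_spec
          rw [← ‹hne.choose = h2.choose›, hchoose] at this
          exact (Finset.mem_inter.1 this).2
        · rw [dif_neg h2] at this; exact absurd this (by simp)
      exact Finset.Subset.antisymm (main I hI J hJ hIJ) (main J hJ I hI hIJ.symm)
  refine card_le.trans ?_
  rw [hT, Finset.card_pi]
  calc ∏ x ∈ X, (insert (none : Option (Fin n → Fin q))
        ((ball x t ∩ S).image some)).card
      ≤ ∏ x ∈ X, (M + 1) := by
        apply Finset.prod_le_prod
        · intro x _; exact Nat.zero_le _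
        · intro x hx
          calc (insert none ((ball x t ∩ S).image some)).card
              ≤ ((ball x t ∩ S).image some).card + 1 := Finset.card_insert_le _ _
            _ ≤ (ball x t ∩ S).card + 1 := by
                have := Finset.card_image_le (f := some) (s := ball x t ∩ S); omega
            _ ≤ M + 1 := by have := hM x hx; omega
    _ = (M + 1) ^ X.card := Finset.prod_const _
end
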